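/- arXiv:2409.00894 — 9 statements merged into one kernel-verified Lean document; each statement's English description precedes it below -/
import Mathlib

section
/- For the deterministic over-parameterized gradient flow of depth parameter D ≥ 0 with arbitrary fixed data z ∈ ℝ, the learned eigenvalue factor t ↦ a(t) b(t)^D is non-decreasing on [0, ∞) (for D = 0 this reads: t ↦ a(t) is non-decreasing). -/
open Real

private lemma const_of_deriv_zero {h : ℝ → ℝ}
    (hd : ∀ t : ℝ, 0 ≤ t → HasDerivAt h 0 t) :
    ∀ t : ℝ, 0 ≤ t → h t = h 0 := by
  intro t ht
  have hcont : ContinuousOn h (Set.Icc 0 t) := fun x hx =>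
    ((hd x hx.1).continuousAt).continuousWithinAt
  exact constant_of_has_deriv_right_zero hcont
    (fun x hx => (hd x hx.1).hasDerivWithinAt) t (Set.right_mem_Icc.2 ht)

private lemma pos_of_ne_zero_aux {f : ℝ → ℝ}
    (hc : ContinuousOn f (Set.Ici 0)) (h0 : 0 < f 0)
    (hne : ∀ t : ℝ, 0 ≤ t → f t ≠ 0) :
    ∀ t : ℝ, 0 ≤ t → 0 < f t := by
  intro t ht
  by_contra hle
  push_neg at hle
  have hlt : f t < 0 := lt_of_le_of_ne hle (hne t ht)
  obtain ⟨c, hc', hfc⟩ := intermediate_value_Icc' ht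
    (hc.mono Set.Icc_subset_Ici_self) ⟨hlt.le, h0.le⟩
  exact hne c hc'.1 hfc

private lemma pos_on_Icc {f : ℝ → ℝ} {T : ℝ} (hT : 0 ≤ T)
    (hc : ContinuousOn f (Set.Icc 0 T)) (h0 : 0 < f 0)
    (hne : ∀ t ∈ Set.Icc (0:ℝ) T, f t ≠ 0) :
    ∀ t ∈ Set.Icc (0:ℝ) T, 0 < f t := by
  intro t ht
  by_contra hle
  push_neg at hle
  have hlt : f t < 0 := lt_of_le_of_ne hle (hne t ht)
  obtain ⟨c, hc', hfc⟩ := intermediate_value_Icc' ht.1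
    (hc.mono (Set.Icc_subset_Icc le_rfl ht.2)) ⟨hlt.le, h0.le⟩
  exact hne c ⟨hc'.1, hc'.2.trans ht.2⟩ hfc

/-- Core sign lemma: if `g' = p·v`, `v' = -k·v`, `p ≥ 0`, `g 0 = 0`, `k` continuous,
then `g·v ≥ 0` on `[0, ∞)`. -/
private lemma key_sign {g v p k : ℝ → ℝ}
    (hg : ∀ t : ℝ, 0 ≤ t → HasDerivAt g (p t * v t) t)
    (hv : ∀ t : ℝ, 0 ≤ t → HasDerivAt v (-(k t * v t)) t)
    (hk : ContinuousOn k (Set.Ici 0))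
    (hp : ∀ t : ℝ, 0 ≤ t → 0 ≤ p t)
    (hg0 : g 0 = 0) :
    ∀ t : ℝ, 0 ≤ t → 0 ≤ g t * v t := by
  intro T hT
  rcases eq_or_lt_of_le hT with rfl | hT'
  · simp [hg0]
  have hvcont : ContinuousOn v (Set.Icc 0 T) := fun x hx =>
    ((hv x hx.1).continuousAt).continuousWithinAt
  by_cases hzero : ∃ t₀ ∈ Set.Icc (0:ℝ) T, v t₀ = 0
  · -- Grönwall forward: v T = 0
    obtain ⟨t₀, ht₀, hv0⟩ := hzero
    obtain ⟨K, hK⟩ := (isCompact_Icc : IsCompact (Set.Icc t₀ T)).exists_bound_of_continuousOn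
      (hk.mono (Set.Icc_subset_Ici_self.trans (Set.Ici_subset_Ici.2 ht₀.1)))
    have hbound := norm_le_gronwallBound_of_norm_deriv_right_le
      (f := v) (f' := fun x => -(k x * v x)) (δ := 0) (K := K) (ε := 0) (a := t₀) (b := T)
      (hvcont.mono (Set.Icc_subset_Icc ht₀.1 le_rfl))
      (fun x hx => (hv x (ht₀.1.trans hx.1)).hasDerivWithinAt)
      (by simp [hv0])
      (fun x hx => by
        have hx' : x ∈ Set.Icc t₀ T := ⟨hx.1, hx.2.le⟩
        calc ‖-(k x * v x)‖ = ‖k x‖ * ‖v x‖ := by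
              rw [norm_neg, norm_mul]
          _ ≤ K * ‖v x‖ + 0 := by
              rw [add_zero]
              exact mul_le_mul_of_nonneg_right (hK x hx') (norm_nonneg _))
    have hvT : ‖v T‖ ≤ 0 := by
      have := hbound T (Set.right_mem_Icc.2 ht₀.2)
      rwa [gronwallBound_ε0_δ0] at this
    have : v T = 0 := by
      simpa using le_antisymm hvT (norm_nonneg _)
    simp [this]
  · push_neg at hzero
    have hgcont : ContinuousOn g (Set.Icc 0 T) := fun x hx =>
      ((hg x hx.1).continuousAt).continuousWithinAt
    have hv0ne : v 0 ≠ 0 := hzero 0 (Set.left_mem_Icc.2 hT)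
    rcases lt_or_gt_of_ne hv0ne with hneg | hpos
    · -- v < 0 on [0,T]; g is antitone, so g T ≤ 0
      have hvneg : ∀ t ∈ Set.Icc (0:ℝ) T, 0 < -v t := by
        have := pos_on_Icc hT (hvcont.neg) (by show 0 < -v 0; linarith) (fun t ht => by
          simpa using hzero t ht)
        simpa using this
      have hanti : AntitoneOn g (Set.Icc 0 T) := by
        apply antitoneOn_of_deriv_nonpos (convex_Icc 0 T) hgcont
        · intro x hx
          rw [interior_Icc] at hx
          exact ((hg x hx.1.le).differentiableAt).differentiableWithinAt
        · intro x hx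
          rw [interior_Icc] at hx
          rw [(hg x hx.1.le).deriv]
          have hv' : v x ≤ 0 := by
            have := hvneg x ⟨hx.1.le, hx.2.le⟩; linarith
          exact mul_nonpos_of_nonneg_of_nonpos (hp x hx.1.le) hv'
      have hgT : g T ≤ 0 := by
        have := hanti (Set.left_mem_Icc.2 hT) (Set.right_mem_Icc.2 hT) hT
        rwa [hg0] at this
      have hvT : v T ≤ 0 := by
        have := hvneg T (Set.right_mem_Icc.2 hT); linarith
      nlinarith [mul_nonneg (neg_nonneg.2 hgT) (neg_nonneg.2 hvT)]
    · -- v > 0 on [0,T]; g is monotone, so g T ≥ 0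
      have hvpos : ∀ t ∈ Set.Icc (0:ℝ) T, 0 < v t :=
        pos_on_Icc hT hvcont hpos hzero
      have hmono : MonotoneOn g (Set.Icc 0 T) := by
        apply monotoneOn_of_deriv_nonneg (convex_Icc 0 T) hgcont
        · intro x hx
          rw [interior_Icc] at hx
          exact ((hg x hx.1.le).differentiableAt).differentiableWithinAt
        · intro x hx
          rw [interior_Icc] at hx
          rw [(hg x hx.1.le).deriv]
          exact mul_nonneg (hp x hx.1.le) (hvpos x ⟨hx.1.le, hx.2.le⟩).le
      have hgT : 0 ≤ g T := by
        have := hmono (Set.left_mem_Icc.2 hT) (Set.right_mem_Icc.2 hT) hT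
        rwa [hg0] at this
      exact mul_nonneg hgT (hvpos T (Set.right_mem_Icc.2 hT)).le

/-- for the deterministic over-parameterized gradient flow of depth
parameter `D ≥ 0` with arbitrary fixed data `z ∈ ℝ`, the learned eigenvalue factor
`t ↦ a(t) b(t)^D` is non-decreasing on `[0, ∞)` (for `D = 0` this reads: `a` is
non-decreasing, since `b(t)^0 = 1`). -/
theorem eigenvalue_factor_monotone
    (D : ℕ) (lam b₀ z : ℝ) (hlam : 0 < lam) (hb₀ : 0 < b₀)
    (a b β : ℝ → ℝ)
    (hflow :
      (D = 0 ∧ a 0 = Real.sqrt lam ∧ β 0 = 0 ∧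
        (∀ t : ℝ, 0 ≤ t → HasDerivAt a (β t * (z - a t * β t)) t) ∧
        (∀ t : ℝ, 0 ≤ t → HasDerivAt β (a t * (z - a t * β t)) t)) ∨
      (1 ≤ D ∧ a 0 = Real.sqrt lam ∧ b 0 = b₀ ∧ β 0 = 0 ∧
        (∀ t : ℝ, 0 ≤ t →
          HasDerivAt a ((b t) ^ D * β t * (z - a t * (b t) ^ D * β t)) t) ∧
        (∀ t : ℝ, 0 ≤ t →
          HasDerivAt b ((D : ℝ) * a t * (b t) ^ (D - 1) * β t *
            (z - a t * (b t) ^ D * β t)) t) ∧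
        (∀ t : ℝ, 0 ≤ t →
          HasDerivAt β (a t * (b t) ^ D * (z - a t * (b t) ^ D * β t)) t))) :
    MonotoneOn (fun t => a t * (b t) ^ D) (Set.Ici (0 : ℝ)) := by
  rcases hflow with ⟨hD0, ha0, hβ0, hda, hdβ⟩ | ⟨hD1, ha0, hb0, hβ0, hda, hdb, hdβ⟩
  · -- D = 0 case
    subst hD0
    simp only [pow_zero, mul_one]
    -- conserved quantity: a² - β² = lam
    have hcons : ∀ t : ℝ, 0 ≤ t → a t ^ 2 - β t ^ 2 = lam := by
      have hder : ∀ t : ℝ, 0 ≤ t → HasDerivAt (fun t => a t ^ 2 - β t ^ 2) 0 t := by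
        intro t ht
        have := ((hda t ht).pow 2).sub ((hdβ t ht).pow 2)
        refine this.congr_deriv ?_
        ring
      intro t ht
      rw [const_of_deriv_zero hder t ht, ha0, hβ0, sq_sqrt hlam.le]
      ring
    have hacont : ContinuousOn a (Set.Ici 0) := fun x hx =>
      ((hda x hx).continuousAt).continuousWithinAt
    have hapos : ∀ t : ℝ, 0 ≤ t → 0 < a t := by
      apply pos_of_ne_zero_aux hacont (by rw [ha0]; exact Real.sqrt_pos.2 hlam)
      intro t ht h0
      have := hcons t ht
      nlinarith [sq_nonneg (β t)]
    have hkey : ∀ t : ℝ, 0 ≤ t → 0 ≤ β t * (z - a t * β t) := by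
      apply key_sign (g := β) (v := fun t => z - a t * β t) (p := a)
        (k := fun t => a t ^ 2 + β t ^ 2)
      · exact hdβ
      · intro t ht
        have := (hasDerivAt_const t z).sub ((hda t ht).mul (hdβ t ht))
        refine this.congr_deriv ?_
        ring
      · have hβcont : ContinuousOn β (Set.Ici 0) := fun x hx =>
          ((hdβ x hx).continuousAt).continuousWithinAt
        exact ((hacont.pow 2).add (hβcont.pow 2))
      · exact fun t ht => (hapos t ht).le
      · exact hβ0
    apply monotoneOn_of_deriv_nonneg (convex_Ici 0) hacont
    · intro x hx
      rw [interior_Ici] at hx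
      exact ((hda x hx.le).differentiableAt).differentiableWithinAt
    · intro x hx
      rw [interior_Ici] at hx
      rw [(hda x hx.le).deriv]
      exact hkey x hx.le
  · -- D ≥ 1 case
    obtain ⟨m, rfl⟩ : ∃ m, D = m + 1 :=
      ⟨D - 1, (Nat.succ_pred_eq_of_pos hD1).symm⟩
    set v : ℝ → ℝ := fun t => z - a t * b t ^ (m + 1) * β t with hv_def
    have hacont : ContinuousOn a (Set.Ici 0) := fun x hx =>
      ((hda x hx).continuousAt).continuousWithinAt
    have hbcont : ContinuousOn b (Set.Ici 0) := fun x hx =>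
      ((hdb x hx).continuousAt).continuousWithinAt
    have hβcont : ContinuousOn β (Set.Ici 0) := fun x hx =>
      ((hdβ x hx).continuousAt).continuousWithinAt
    -- conserved quantity 1: a² - β² = lam
    have hcons1 : ∀ t : ℝ, 0 ≤ t → a t ^ 2 - β t ^ 2 = lam := by
      have hder : ∀ t : ℝ, 0 ≤ t → HasDerivAt (fun t => a t ^ 2 - β t ^ 2) 0 t := by
        intro t ht
        have := ((hda t ht).pow 2).sub ((hdβ t ht).pow 2)
        refine this.congr_deriv ?_
        ring
      intro t ht
      rw [const_of_deriv_zero hder t ht, ha0, hβ0, sq_sqrt hlam.le]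
      ring
    -- conserved quantity 2: b² - (m+1)·β² = b₀²
    have hcons2 : ∀ t : ℝ, 0 ≤ t → b t ^ 2 - (m + 1 : ℝ) * β t ^ 2 = b₀ ^ 2 := by
      have hder : ∀ t : ℝ, 0 ≤ t →
          HasDerivAt (fun t => b t ^ 2 - (m + 1 : ℝ) * β t ^ 2) 0 t := by
        intro t ht
        have := ((hdb t ht).pow 2).sub (((hdβ t ht).pow 2).const_mul (m + 1 : ℝ))
        refine this.congr_deriv ?_
        simp only [Nat.add_sub_cancel, Nat.cast_add, Nat.cast_one]
        ring
      intro t ht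
      rw [const_of_deriv_zero hder t ht, hb0, hβ0]
      ring
    have hapos : ∀ t : ℝ, 0 ≤ t → 0 < a t := by
      apply pos_of_ne_zero_aux hacont (by rw [ha0]; exact Real.sqrt_pos.2 hlam)
      intro t ht h0
      have := hcons1 t ht
      nlinarith [sq_nonneg (β t)]
    have hbpos : ∀ t : ℝ, 0 ≤ t → 0 < b t := by
      apply pos_of_ne_zero_aux hbcont (by rw [hb0]; exact hb₀)
      intro t ht h0
      have := hcons2 t ht
      nlinarith [sq_nonneg (β t), mul_nonneg (by positivity : (0:ℝ) ≤ (m + 1 : ℝ))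
        (sq_nonneg (β t))]
    have hkey : ∀ t : ℝ, 0 ≤ t → 0 ≤ β t * v t := by
      apply key_sign (g := β) (v := v) (p := fun t => a t * b t ^ (m + 1))
        (k := fun t => b t ^ (m + 1) * b t ^ (m + 1) * β t ^ 2
          + (m + 1 : ℝ) ^ 2 * a t ^ 2 * (b t ^ m) ^ 2 * β t ^ 2
          + a t ^ 2 * b t ^ (m + 1) * b t ^ (m + 1))
      · exact hdβ
      · intro t ht
        have := (hasDerivAt_const t z).sub
          (((hda t ht).mul ((hdb t ht).pow (m + 1))).mul (hdβ t ht))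
        refine this.congr_deriv ?_
        simp only [Nat.add_sub_cancel, Nat.cast_add, Nat.cast_one, Pi.pow_apply, Pi.mul_apply, hv_def]
        ring
      · apply ContinuousOn.add
        apply ContinuousOn.add
        · exact ((hbcont.pow _).mul (hbcont.pow _)).mul (hβcont.pow 2)
        · exact ((((continuousOn_const).mul (hacont.pow 2)).mul
            ((hbcont.pow m).pow 2)).mul (hβcont.pow 2))
        · exact ((hacont.pow 2).mul (hbcont.pow _)).mul (hbcont.pow _)
      · intro t ht
        exact (mul_pos (hapos t ht) (pow_pos (hbpos t ht) _)).le
      · exact hβ0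
    have hFcont : ContinuousOn (fun t => a t * b t ^ (m + 1)) (Set.Ici 0) :=
      hacont.mul (hbcont.pow _)
    apply monotoneOn_of_deriv_nonneg (convex_Ici 0) hFcont
    · intro x hx
      rw [interior_Ici] at hx
      exact (((hda x hx.le).mul ((hdb x hx.le).pow (m + 1))).differentiableAt).differentiableWithinAt
    · intro x hx
      rw [interior_Ici] at hx
      rw [HasDerivAt.deriv (f := fun t => a t * b t ^ (m + 1)) ((hda x hx.le).mul ((hdb x hx.le).pow (m + 1)))]
      have heq : b x ^ (m + 1) * β x * (z - a x * b x ^ (m + 1) * β x) * b x ^ (m + 1)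
          + a x * ((↑(m + 1) : ℝ) * b x ^ (m + 1 - 1) *
            ((↑(m + 1) : ℝ) * a x * b x ^ (m + 1 - 1) * β x *
              (z - a x * b x ^ (m + 1) * β x)))
          = (b x ^ (m + 1) * b x ^ (m + 1)
              + (m + 1 : ℝ) ^ 2 * a x ^ 2 * (b x ^ m) ^ 2) * (β x * v x) := by
        simp only [Nat.add_sub_cancel, Nat.cast_add, Nat.cast_one, hv_def]
        ring
      rw [heq]
      have hbx := hbpos x hx.le
      have hax := hapos x hx.le
      exact mul_nonneg (by positivity) (hkey x hx.le)
end

section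
/- For the two-layer gradient flow, the product θ(t) = a(t)β(t) satisfies the autonomous ODE θ'(t) = √(λ² + 4θ(t)²) · (z − θ(t)) for all t ≥ 0, with θ(0) = 0. -/
open Real

/-- For the two-layer gradient flow, the product `θ(t) = a(t)β(t)` satisfies
the autonomous ODE `θ' = √(λ² + 4θ²)(z − θ)` for all `t ≥ 0`, with `θ(0) = 0`. -/
theorem two_layer_theta_ode
    (lam z : ℝ) (hlam : 0 < lam)
    (a β : ℝ → ℝ)
    (ha0 : a 0 = Real.sqrt lam) (hβ0 : β 0 = 0)
    (ha : ∀ t : ℝ, 0 ≤ t → HasDerivAt a (β t * (z - a t * β t)) t)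
    (hβ : ∀ t : ℝ, 0 ≤ t → HasDerivAt β (a t * (z - a t * β t)) t) :
    a 0 * β 0 = 0 ∧
      ∀ t : ℝ, 0 ≤ t →
        HasDerivAt (fun u => a u * β u)
          (Real.sqrt (lam ^ 2 + 4 * (a t * β t) ^ 2) * (z - a t * β t)) t := by
  have hconst : ∀ t : ℝ, 0 ≤ t → a t ^ 2 - β t ^ 2 = lam := by
    intro t ht
    have hcont : ContinuousOn (fun u => a u ^ 2 - β u ^ 2) (Set.Icc 0 t) := by
      intro x hx
      exact (((ha x hx.1).continuousAt.pow 2).sub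
        ((hβ x hx.1).continuousAt.pow 2)).continuousWithinAt
    have hderiv : ∀ x ∈ Set.Ico (0:ℝ) t,
        HasDerivWithinAt (fun u => a u ^ 2 - β u ^ 2) 0 (Set.Ici x) x := by
      intro x hx
      have h1 := ((ha x hx.1).pow 2).sub ((hβ x hx.1).pow 2)
      have h2 : HasDerivAt (fun u => a u ^ 2 - β u ^ 2) 0 x := by
        refine h1.congr_deriv ?_; push_cast; ring
      exact h2.hasDerivWithinAt
    have := constant_of_has_deriv_right_zero hcont hderiv t (Set.right_mem_Icc.2 ht)
    rw [this, ha0, hβ0, Real.sq_sqrt hlam.le]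
    ring
  have hsqrt : ∀ t : ℝ, 0 ≤ t →
      Real.sqrt (lam ^ 2 + 4 * (a t * β t) ^ 2) = a t ^ 2 + β t ^ 2 := by
    intro t ht
    have h := hconst t ht
    have : lam ^ 2 + 4 * (a t * β t) ^ 2 = (a t ^ 2 + β t ^ 2) ^ 2 := by
      rw [← h]; ring
    rw [this, Real.sqrt_sq (by positivity)]
  refine ⟨by rw [hβ0]; ring, fun t ht => ?_⟩
  have h1 := ((ha t ht).mul (hβ t ht))
  rw [hsqrt t ht]
  refine h1.congr_deriv ?_
  ring
end

section
/- Let θ solve θ' = √(λ² + 4θ²)(z − θ) with θ(0) = 0 and let θ̃ solve θ̃' = (λ + 2|θ̃|)(z − θ̃) with θ̃(0) = 0. If z ≥ 0 then for all t ≥ 0: 0 ≤ θ̃(t/√2) ≤ θ(t) ≤ θ̃(t) ≤ z; if z ≤ 0 then for all t ≥ 0: 0 ≥ θ̃(t/√2) ≥ θ(t) ≥ θ̃(t) ≥ z. -/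
open Real

/-- One-sided comparison: if `v 0 ≤ 0` and `v' ≤ L v` whenever `v ≥ 0`, then `v ≤ 0`. -/
lemma cmp_aux (L : ℝ) (v v' : ℝ → ℝ)
    (hv0 : v 0 ≤ 0)
    (hd : ∀ t, 0 ≤ t → HasDerivAt v (v' t) t)
    (hb : ∀ t, 0 ≤ t → 0 ≤ v t → v' t ≤ L * v t) :
    ∀ t, 0 ≤ t → v t ≤ 0 := by
  intro t0 ht0
  by_contra hpos
  push_neg at hpos
  have h0S : (0:ℝ) ∈ {t | t ∈ Set.Icc 0 t0 ∧ v t ≤ 0} := ⟨⟨le_refl 0, ht0⟩, hv0⟩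
  have hbdd : BddAbove {t | t ∈ Set.Icc 0 t0 ∧ v t ≤ 0} := ⟨t0, fun x hx => hx.1.2⟩
  obtain ⟨s, hs⟩ : ∃ s, s = sSup {t | t ∈ Set.Icc 0 t0 ∧ v t ≤ 0} := ⟨_, rfl⟩
  have hs0 : 0 ≤ s := hs ▸ le_csSup hbdd h0S
  have hst0 : s ≤ t0 := hs ▸ csSup_le ⟨0, h0S⟩ (fun x hx => hx.1.2)
  have hcont : ∀ x, 0 ≤ x → ContinuousAt v x := fun x hx => (hd x hx).continuousAt
  -- v s ≤ 0
  have hvs_le : v s ≤ 0 := by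
    by_contra h
    push_neg at h
    have hev : ∀ᶠ x in nhds s, 0 < v x :=
      (hcont s hs0).eventually (eventually_gt_nhds h)
    obtain ⟨ε, hε, hball⟩ := Metric.eventually_nhds_iff.1 hev
    obtain ⟨y, hyS, hy⟩ := exists_lt_of_lt_csSup ⟨0, h0S⟩ (hs ▸ (by linarith : s - ε < s))
    have hys : y ≤ s := hs ▸ le_csSup hbdd hyS
    have : 0 < v y := hball (by rw [Real.dist_eq, abs_lt]; constructor <;> linarith)
    linarith [hyS.2]
  -- points strictly above s (up to t0) have v > 0
  have hgt : ∀ x, s < x → x ≤ t0 → 0 < v x := by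
    intro x hsx hxt0
    by_contra h
    push_neg at h
    have hxS : x ∈ {t | t ∈ Set.Icc 0 t0 ∧ v t ≤ 0} :=
      ⟨⟨le_trans hs0 (le_of_lt hsx), hxt0⟩, h⟩
    have : x ≤ s := hs ▸ le_csSup hbdd hxS
    linarith
  have hst0' : s < t0 := lt_of_le_of_ne hst0 (by rintro rfl; linarith)
  -- v s ≥ 0 by right continuity
  have hvs_ge : 0 ≤ v s := by
    have htend : Filter.Tendsto v (nhdsWithin s (Set.Ioi s)) (nhds (v s)) :=
      ((hcont s hs0).continuousWithinAt).tendsto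
    refine ge_of_tendsto htend ?_
    have hmem : Set.Ioc s t0 ∈ nhdsWithin s (Set.Ioi s) :=
      Ioc_mem_nhdsGT_of_mem ⟨le_refl s, hst0'⟩
    filter_upwards [hmem] with x hx
    exact le_of_lt (hgt x hx.1 hx.2)
  have hvs : v s = 0 := le_antisymm hvs_le hvs_ge
  -- v ≥ 0 on [s, t0]
  have hnn : ∀ x ∈ Set.Icc s t0, 0 ≤ v x := by
    intro x hx
    rcases eq_or_lt_of_le hx.1 with h | h
    · rw [← h, hvs]
    · exact le_of_lt (hgt x h hx.2)
  -- Gronwall on [s, t0]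
  have hG := le_gronwallBound_of_liminf_deriv_right_le (f := v) (f' := v')
    (δ := 0) (K := L) (ε := 0) (a := s) (b := t0)
    (fun x hx => (hcont x (le_trans hs0 hx.1)).continuousWithinAt)
    (fun x hx r hr =>
      ((hd x (le_trans hs0 hx.1)).hasDerivWithinAt.liminf_right_slope_le hr))
    (le_of_eq hvs)
    (fun x hx => by
      rw [add_zero]
      exact hb x (le_trans hs0 hx.1) (hnn x ⟨hx.1, le_of_lt hx.2⟩))
  have := hG t0 ⟨le_of_lt hst0', le_refl t0⟩
  rw [gronwallBound_ε0_δ0] at this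
  linarith

/-- Solving `θ' = w(t)(z - θ)`, `θ 0 = 0` explicitly. -/
lemma solve_aux (z : ℝ) (θ w : ℝ → ℝ) (hw : Continuous w)
    (hθ0 : θ 0 = 0)
    (hθ : ∀ t, 0 ≤ t → HasDerivAt θ (w t * (z - θ t)) t) :
    ∀ t, 0 ≤ t → θ t = z * (1 - Real.exp (-∫ s in (0:ℝ)..t, w s)) := by
  intro T hT
  set I : ℝ → ℝ := fun t => ∫ s in (0:ℝ)..t, w s with hIdef
  have hId : ∀ t : ℝ, HasDerivAt I (w t) t := fun t =>
    (hw.integral_hasStrictDerivAt 0 t).hasDerivAt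
  set F : ℝ → ℝ := fun t => (θ t - z) * Real.exp (I t) with hFdef
  have hFd : ∀ t, 0 ≤ t → HasDerivAt F 0 t := by
    intro t ht
    have h1 : HasDerivAt F
        ((w t * (z - θ t)) * Real.exp (I t) + (θ t - z) * (Real.exp (I t) * w t)) t :=
      ((hθ t ht).sub_const z).mul ((hId t).exp)
    have h2 : (w t * (z - θ t)) * Real.exp (I t) + (θ t - z) * (Real.exp (I t) * w t) = 0 := by
      ring
    rwa [h2] at h1
  have hFc : ContinuousOn F (Set.Icc 0 T) :=
    fun x hx => ((hFd x hx.1).continuousAt).continuousWithinAt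
  have hconst := constant_of_has_deriv_right_zero hFc
    (fun x hx => (hFd x hx.1).hasDerivWithinAt) T ⟨hT, le_refl T⟩
  have hI0 : I 0 = 0 := intervalIntegral.integral_same
  have hF0 : F 0 = -z := by simp [hFdef, hθ0, hI0]
  have hkey : (θ T - z) * Real.exp (I T) = -z := by rw [← hF0]; exact hconst
  have he : (0:ℝ) < Real.exp (I T) := Real.exp_pos _
  rw [Real.exp_neg]
  field_simp
  nlinarith [hkey]

/-- Lipschitz-type estimate for `x ↦ √(c + 4 (z (1 - e^{-x}))²)`. -/
lemma sqrt_lip (lam z : ℝ) (hlam : 0 ≤ lam) {a b : ℝ} (hb : 0 ≤ b) (hab : b ≤ a) :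
    Real.sqrt (lam ^ 2 + 4 * (z * (1 - Real.exp (-a))) ^ 2)
      ≤ Real.sqrt (lam ^ 2 + 4 * (z * (1 - Real.exp (-b))) ^ 2) + 2 * |z| * (a - b) := by
  set p := |z| * (1 - Real.exp (-a)) with hp
  set q := |z| * (1 - Real.exp (-b)) with hq
  have heb1 : Real.exp (-b) ≤ 1 := by
    rw [← Real.exp_zero]; exact Real.exp_le_exp.2 (by linarith)
  have heab : Real.exp (-a) ≤ Real.exp (-b) := Real.exp_le_exp.2 (by linarith)
  have hq0 : 0 ≤ q := mul_nonneg (abs_nonneg z) (by linarith)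
  have hqp : q ≤ p := by
    apply mul_le_mul_of_nonneg_left _ (abs_nonneg z); linarith
  have hpq : p - q ≤ |z| * (a - b) := by
    have h1 : Real.exp (-b) - Real.exp (-a) ≤ a - b := by
      have h2 : 1 + -(a - b) ≤ Real.exp (-(a - b)) := by
        linarith [Real.add_one_le_exp (-(a - b))]
      have h3 : Real.exp (-a) = Real.exp (-b) * Real.exp (-(a - b)) := by
        rw [← Real.exp_add]; ring_nf
      nlinarith [Real.exp_pos (-b), Real.exp_pos (-(a - b))]
    have := mul_le_mul_of_nonneg_left h1 (abs_nonneg z)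
    calc p - q = |z| * (Real.exp (-b) - Real.exp (-a)) := by rw [hp, hq]; ring
      _ ≤ |z| * (a - b) := this
  have hps : (z * (1 - Real.exp (-a))) ^ 2 = p ^ 2 := by
    rw [hp, mul_pow, mul_pow, sq_abs]
  have hqs : (z * (1 - Real.exp (-b))) ^ 2 = q ^ 2 := by
    rw [hq, mul_pow, mul_pow, sq_abs]
  rw [hps, hqs]
  have hX : 2 * q ≤ Real.sqrt (lam ^ 2 + 4 * q ^ 2) := by
    rw [Real.le_sqrt (by linarith) (by positivity)]
    nlinarith [sq_nonneg lam]
  have hs2 : (Real.sqrt (lam ^ 2 + 4 * q ^ 2)) ^ 2 = lam ^ 2 + 4 * q ^ 2 :=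
    Real.sq_sqrt (by positivity)
  have hmain : Real.sqrt (lam ^ 2 + 4 * p ^ 2)
      ≤ Real.sqrt (lam ^ 2 + 4 * q ^ 2) + 2 * (p - q) := by
    have hRnn : 0 ≤ Real.sqrt (lam ^ 2 + 4 * q ^ 2) + 2 * (p - q) := by
      have := Real.sqrt_nonneg (lam ^ 2 + 4 * q ^ 2); linarith
    have h1 : lam ^ 2 + 4 * p ^ 2
        ≤ (Real.sqrt (lam ^ 2 + 4 * q ^ 2) + 2 * (p - q)) ^ 2 := by
      nlinarith [hX, Real.sqrt_nonneg (lam ^ 2 + 4 * q ^ 2)]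
    calc Real.sqrt (lam ^ 2 + 4 * p ^ 2)
        ≤ Real.sqrt ((Real.sqrt (lam ^ 2 + 4 * q ^ 2) + 2 * (p - q)) ^ 2) :=
          Real.sqrt_le_sqrt h1
      _ = Real.sqrt (lam ^ 2 + 4 * q ^ 2) + 2 * (p - q) := Real.sqrt_sq hRnn
  linarith

/-- `√(λ² + 4 z² u²) ≤ λ + 2|z| u` for `u ≥ 0`. -/
lemma f_le_g (lam z u : ℝ) (hlam : 0 ≤ lam) (hu : 0 ≤ u) :
    Real.sqrt (lam ^ 2 + 4 * (z * u) ^ 2) ≤ lam + 2 * (|z| * u) := by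
  have hR : 0 ≤ lam + 2 * (|z| * u) := by positivity
  have hzz : (z * u) ^ 2 = (|z| * u) ^ 2 := by rw [mul_pow, mul_pow, sq_abs]
  have h1 : lam ^ 2 + 4 * (z * u) ^ 2 ≤ (lam + 2 * (|z| * u)) ^ 2 := by
    nlinarith [hzz, mul_nonneg (mul_nonneg hlam (abs_nonneg z)) hu]
  calc Real.sqrt (lam ^ 2 + 4 * (z * u) ^ 2)
      ≤ Real.sqrt ((lam + 2 * (|z| * u)) ^ 2) := Real.sqrt_le_sqrt h1
    _ = lam + 2 * (|z| * u) := Real.sqrt_sq hR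

/-- `(λ + 2|z| u)/√2 ≤ √(λ² + 4 z² u²)` for `u ≥ 0`. -/
lemma g_le_f (lam z u : ℝ) (hlam : 0 ≤ lam) (hu : 0 ≤ u) :
    (lam + 2 * (|z| * u)) * (Real.sqrt 2)⁻¹ ≤ Real.sqrt (lam ^ 2 + 4 * (z * u) ^ 2) := by
  have h2 : (0:ℝ) < Real.sqrt 2 := Real.sqrt_pos.2 (by norm_num)
  rw [← div_eq_mul_inv, div_le_iff₀ h2]
  have hrw : Real.sqrt (lam ^ 2 + 4 * (z * u) ^ 2) * Real.sqrt 2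
      = Real.sqrt (2 * (lam ^ 2 + 4 * (z * u) ^ 2)) := by
    rw [← Real.sqrt_mul (by positivity), mul_comm]
  rw [hrw]
  rw [Real.le_sqrt (by positivity) (by positivity)]
  have hzz : (z * u) ^ 2 = (|z| * u) ^ 2 := by rw [mul_pow, mul_pow, sq_abs]
  nlinarith [hzz, sq_nonneg (lam - 2 * (|z| * u))]

/-- comparison between the flow `θ' = √(λ² + 4θ²)(z − θ)` and the
comparison flow `θ̃' = (λ + 2|θ̃|)(z − θ̃)`, both started at `0`. -/
theorem theta_comparison
    (lam z : ℝ) (hlam : 0 < lam)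
    (θ θt : ℝ → ℝ)
    (hθ0 : θ 0 = 0) (hθt0 : θt 0 = 0)
    (hθ : ∀ t : ℝ, 0 ≤ t →
      HasDerivAt θ (Real.sqrt (lam ^ 2 + 4 * (θ t) ^ 2) * (z - θ t)) t)
    (hθt : ∀ t : ℝ, 0 ≤ t →
      HasDerivAt θt ((lam + 2 * |θt t|) * (z - θt t)) t) :
    (0 ≤ z → ∀ t : ℝ, 0 ≤ t →
      0 ≤ θt (t / Real.sqrt 2) ∧ θt (t / Real.sqrt 2) ≤ θ t ∧ θ t ≤ θt t ∧ θt t ≤ z) ∧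
    (z ≤ 0 → ∀ t : ℝ, 0 ≤ t →
      θt (t / Real.sqrt 2) ≤ 0 ∧ θ t ≤ θt (t / Real.sqrt 2) ∧ θt t ≤ θ t ∧ z ≤ θt t) := by
  have hlam' : 0 ≤ lam := le_of_lt hlam
  -- clamped coefficient functions
  set k1 : ℝ → ℝ := fun t => Real.sqrt (lam ^ 2 + 4 * (θ (max t 0)) ^ 2) with hk1def
  set k2 : ℝ → ℝ := fun t => lam + 2 * |θt (max t 0)| with hk2def
  have hmaxc : Continuous (fun t : ℝ => max t 0) := continuous_id.max continuous_const
  have hθc : Continuous (fun t => θ (max t 0)) := by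
    rw [continuous_iff_continuousAt]
    intro x
    have : ContinuousAt (θ ∘ fun t : ℝ => max t 0) x :=
      ContinuousAt.comp ((hθ _ (le_max_right x 0)).continuousAt) hmaxc.continuousAt
    exact this
  have hθtc : Continuous (fun t => θt (max t 0)) := by
    rw [continuous_iff_continuousAt]
    intro x
    have : ContinuousAt (θt ∘ fun t : ℝ => max t 0) x :=
      ContinuousAt.comp ((hθt _ (le_max_right x 0)).continuousAt) hmaxc.continuousAt
    exact this
  have hk1c : Continuous k1 := by
    apply Continuous.sqrt
    exact continuous_const.add (continuous_const.mul (hθc.pow 2))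
  have hk2c : Continuous k2 :=
    continuous_const.add (continuous_const.mul hθtc.abs)
  have hk1eq : ∀ t : ℝ, 0 ≤ t → k1 t = Real.sqrt (lam ^ 2 + 4 * (θ t) ^ 2) := by
    intro t ht; simp [hk1def, max_eq_left ht]
  have hk2eq : ∀ t : ℝ, 0 ≤ t → k2 t = lam + 2 * |θt t| := by
    intro t ht; simp [hk2def, max_eq_left ht]
  set K : ℝ → ℝ := fun t => ∫ s in (0:ℝ)..t, k1 s with hKdef
  set Kt : ℝ → ℝ := fun t => ∫ s in (0:ℝ)..t, k2 s with hKtdef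
  have hKd : ∀ t : ℝ, HasDerivAt K (k1 t) t := fun t =>
    (hk1c.integral_hasStrictDerivAt 0 t).hasDerivAt
  have hKtd : ∀ t : ℝ, HasDerivAt Kt (k2 t) t := fun t =>
    (hk2c.integral_hasStrictDerivAt 0 t).hasDerivAt
  have hK0 : K 0 = 0 := intervalIntegral.integral_same
  have hKt0 : Kt 0 = 0 := intervalIntegral.integral_same
  have hKnn : ∀ t : ℝ, 0 ≤ t → 0 ≤ K t := fun t ht =>
    intervalIntegral.integral_nonneg ht (fun u _ => Real.sqrt_nonneg _)
  have hKtnn : ∀ t : ℝ, 0 ≤ t → 0 ≤ Kt t := fun t ht =>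
    intervalIntegral.integral_nonneg ht (fun u _ => by
      simp only [hk2def]
      positivity)
  -- explicit solution formulas
  have hθsol : ∀ t : ℝ, 0 ≤ t → θ t = z * (1 - Real.exp (-(K t))) := by
    have := solve_aux z θ k1 hk1c hθ0 (fun t ht => by
      rw [hk1eq t ht]; exact hθ t ht)
    intro t ht; exact this t ht
  have hθtsol : ∀ t : ℝ, 0 ≤ t → θt t = z * (1 - Real.exp (-(Kt t))) := by
    have := solve_aux z θt k2 hk2c hθt0 (fun t ht => by
      rw [hk2eq t ht]; exact hθt t ht)
    intro t ht; exact this t ht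
  -- coefficient functions in terms of K, Kt
  have hk1f : ∀ t : ℝ, 0 ≤ t →
      k1 t = Real.sqrt (lam ^ 2 + 4 * (z * (1 - Real.exp (-(K t)))) ^ 2) := by
    intro t ht
    rw [hk1eq t ht, hθsol t ht]
  have hk2g : ∀ t : ℝ, 0 ≤ t →
      k2 t = lam + 2 * (|z| * (1 - Real.exp (-(Kt t)))) := by
    intro t ht
    have h1 : (0:ℝ) ≤ 1 - Real.exp (-(Kt t)) := by
      have : Real.exp (-(Kt t)) ≤ 1 := by
        rw [← Real.exp_zero]; exact Real.exp_le_exp.2 (by linarith [hKtnn t ht])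
      linarith
    rw [hk2eq t ht, hθtsol t ht, abs_mul, abs_of_nonneg h1]
  have hs2 : (0:ℝ) < Real.sqrt 2 := Real.sqrt_pos.2 (by norm_num)
  -- comparison 1 : K ≤ Kt on [0, ∞)
  have hKle : ∀ t : ℝ, 0 ≤ t → K t ≤ Kt t := by
    have := cmp_aux (2 * |z|) (fun t => K t - Kt t) (fun t => k1 t - k2 t)
      (by simp [hK0, hKt0])
      (fun t ht => (hKd t).sub (hKtd t))
      (fun t ht hv => by
        have hKtK : Kt t ≤ K t := by linarith
        have h1 := sqrt_lip lam z hlam' (hKtnn t ht) hKtK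
        have h2 : (0:ℝ) ≤ 1 - Real.exp (-(Kt t)) := by
          have : Real.exp (-(Kt t)) ≤ 1 := by
            rw [← Real.exp_zero]; exact Real.exp_le_exp.2 (by linarith [hKtnn t ht])
          linarith
        have h3 := f_le_g lam z (1 - Real.exp (-(Kt t))) hlam' h2
        rw [hk1f t ht, hk2g t ht]
        linarith)
    intro t ht
    have := this t ht
    simpa using this
  -- comparison 2 : Kt (t/√2) ≤ K t on [0, ∞)
  have hLle : ∀ t : ℝ, 0 ≤ t → Kt (t / Real.sqrt 2) ≤ K t := by
    have hdiv : ∀ t : ℝ, HasDerivAt (fun t : ℝ => Kt (t / Real.sqrt 2))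
        (k2 (t / Real.sqrt 2) * (Real.sqrt 2)⁻¹) t := by
      intro t
      have h1 : HasDerivAt (fun t : ℝ => t / Real.sqrt 2) ((Real.sqrt 2)⁻¹) t := by
        simpa using (hasDerivAt_id t).div_const (Real.sqrt 2)
      exact (hKtd (t / Real.sqrt 2)).comp t h1
    have := cmp_aux (2 * |z|) (fun t => Kt (t / Real.sqrt 2) - K t)
      (fun t => k2 (t / Real.sqrt 2) * (Real.sqrt 2)⁻¹ - k1 t)
      (by simp [hK0, hKt0])
      (fun t ht => (hdiv t).sub (hKd t))
      (fun t ht hv => by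
        have hts : 0 ≤ t / Real.sqrt 2 := div_nonneg ht (le_of_lt hs2)
        have hKA : K t ≤ Kt (t / Real.sqrt 2) := by linarith
        have hA2 : (0:ℝ) ≤ 1 - Real.exp (-(Kt (t / Real.sqrt 2))) := by
          have : Real.exp (-(Kt (t / Real.sqrt 2))) ≤ 1 := by
            rw [← Real.exp_zero]
            exact Real.exp_le_exp.2 (by linarith [hKtnn _ hts])
          linarith
        have h1 := g_le_f lam z (1 - Real.exp (-(Kt (t / Real.sqrt 2)))) hlam' hA2
        have h2 := sqrt_lip lam z hlam' (hKnn t ht) hKA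
        rw [hk1f t ht, hk2g _ hts]
        linarith)
    intro t ht
    have := this t ht
    simpa using this
  -- final assembly
  have key : ∀ t : ℝ, 0 ≤ t →
      θt (t / Real.sqrt 2) = z * (1 - Real.exp (-(Kt (t / Real.sqrt 2)))) ∧
      0 ≤ Kt (t / Real.sqrt 2) ∧ Kt (t / Real.sqrt 2) ≤ K t ∧ K t ≤ Kt t := by
    intro t ht
    have hts : 0 ≤ t / Real.sqrt 2 := div_nonneg ht (le_of_lt hs2)
    exact ⟨hθtsol _ hts, hKtnn _ hts, hLle t ht, hKle t ht⟩
  constructor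
  · intro hz t ht
    obtain ⟨hA, hAnn, hAB, hBC⟩ := key t ht
    rw [hA, hθsol t ht, hθtsol t ht]
    set A := Kt (t / Real.sqrt 2)
    set B := K t
    set C := Kt t
    have heA : Real.exp (-A) ≤ 1 := by
      rw [← Real.exp_zero]; exact Real.exp_le_exp.2 (by linarith)
    have heAB : Real.exp (-B) ≤ Real.exp (-A) := Real.exp_le_exp.2 (by linarith)
    have heBC : Real.exp (-C) ≤ Real.exp (-B) := Real.exp_le_exp.2 (by linarith)
    have heC : 0 < Real.exp (-C) := Real.exp_pos _
    refine ⟨by nlinarith, by nlinarith, by nlinarith, by nlinarith⟩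
  · intro hz t ht
    obtain ⟨hA, hAnn, hAB, hBC⟩ := key t ht
    rw [hA, hθsol t ht, hθtsol t ht]
    set A := Kt (t / Real.sqrt 2)
    set B := K t
    set C := Kt t
    have heA : Real.exp (-A) ≤ 1 := by
      rw [← Real.exp_zero]; exact Real.exp_le_exp.2 (by linarith)
    have heAB : Real.exp (-B) ≤ Real.exp (-A) := Real.exp_le_exp.2 (by linarith)
    have heBC : Real.exp (-C) ≤ Real.exp (-B) := Real.exp_le_exp.2 (by linarith)
    have heC : 0 < Real.exp (-C) := Real.exp_pos _
    refine ⟨by nlinarith, by nlinarith, by nlinarith, by nlinarith⟩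
end

section
/- The function θ̃(t) = [λ(E(t) − 1) / (2|z| + λ E(t))] · z, where E(t) = exp((2|z| + λ)t), satisfies θ̃(0) = 0 and the ODE θ̃'(t) = (λ + 2|θ̃(t)|)(z − θ̃(t)) for all t ≥ 0. -/
open Real

/-- the explicit function `θ̃(t) = λ(E(t) − 1)z / (2|z| + λE(t))`, with
`E(t) = exp((2|z| + λ)t)`, satisfies `θ̃(0) = 0` and `θ̃' = (λ + 2|θ̃|)(z − θ̃)` on `[0,∞)`. -/
theorem theta_tilde_explicit_solution
    (lam z : ℝ) (hlam : 0 < lam)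
    (θt : ℝ → ℝ)
    (hθt : ∀ t : ℝ, θt t =
      lam * (Real.exp ((2 * |z| + lam) * t) - 1) * z /
        (2 * |z| + lam * Real.exp ((2 * |z| + lam) * t))) :
    θt 0 = 0 ∧
      ∀ t : ℝ, 0 ≤ t → HasDerivAt θt ((lam + 2 * |θt t|) * (z - θt t)) t := by
  have hfun : θt = fun t => lam * (Real.exp ((2 * |z| + lam) * t) - 1) * z /
      (2 * |z| + lam * Real.exp ((2 * |z| + lam) * t)) := funext hθt
  subst hfun
  constructor
  · simp
  · intro t ht
    have ha : (0:ℝ) < 2 * |z| + lam := by positivity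
    have hE1 : (1:ℝ) ≤ Real.exp ((2 * |z| + lam) * t) := by
      rw [show (1:ℝ) = Real.exp 0 by simp]
      exact Real.exp_le_exp.mpr (by nlinarith)
    have hv : (0:ℝ) < 2 * |z| + lam * Real.exp ((2 * |z| + lam) * t) := by positivity
    have h1 : HasDerivAt (fun s : ℝ => (2 * |z| + lam) * s) (2 * |z| + lam) t := by
      simpa using (hasDerivAt_id t).const_mul (2 * |z| + lam)
    have hexp : HasDerivAt (fun s : ℝ => Real.exp ((2 * |z| + lam) * s))
        (Real.exp ((2 * |z| + lam) * t) * (2 * |z| + lam)) t :=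
      (Real.hasDerivAt_exp ((2 * |z| + lam) * t)).comp t h1
    have hnum : HasDerivAt (fun s : ℝ => lam * (Real.exp ((2 * |z| + lam) * s) - 1) * z)
        (lam * (Real.exp ((2 * |z| + lam) * t) * (2 * |z| + lam)) * z) t :=
      ((hexp.sub_const 1).const_mul lam).mul_const z
    have hden : HasDerivAt (fun s : ℝ => 2 * |z| + lam * Real.exp ((2 * |z| + lam) * s))
        (lam * (Real.exp ((2 * |z| + lam) * t) * (2 * |z| + lam))) t :=
      (hexp.const_mul lam).const_add (2 * |z|)
    have hdiv := hnum.div hden hv.ne'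
    have habs : |lam * (Real.exp ((2 * |z| + lam) * t) - 1) * z /
        (2 * |z| + lam * Real.exp ((2 * |z| + lam) * t))| =
        lam * (Real.exp ((2 * |z| + lam) * t) - 1) * |z| /
        (2 * |z| + lam * Real.exp ((2 * |z| + lam) * t)) := by
      rw [abs_div, abs_mul, abs_mul, abs_of_pos hlam,
        abs_of_nonneg (by linarith : (0:ℝ) ≤ Real.exp ((2 * |z| + lam) * t) - 1),
        abs_of_pos hv]
    convert hdiv using 1
    · rfl
    · rfl
    · rfl
    beta_reduce
    rw [habs]
    field_simp
    ring
end

section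
/- For the deep gradient flow with D ≥ 1 layers, the conservation identities a(t)² = λ + β(t)² and b(t)² = b₀² + D β(t)² hold for all t ≥ 0; in particular a(t) = (λ + β(t)²)^{1/2} > 0 and b(t) = (b₀² + D β(t)²)^{1/2} > 0 for all t ≥ 0. -/
open Real

/-- conservation identities for the deep gradient flow with `D ≥ 1` layers:
`a(t)² = λ + β(t)²` and `b(t)² = b₀² + D β(t)²`, hence
`a(t) = √(λ + β(t)²) > 0` and `b(t) = √(b₀² + D β(t)²) > 0`. -/
theorem deep_flow_conservation
    (D : ℕ) (hD : 1 ≤ D) (lam b₀ z : ℝ) (hlam : 0 < lam) (hb₀ : 0 < b₀)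
    (a b β : ℝ → ℝ)
    (ha0 : a 0 = Real.sqrt lam) (hb0 : b 0 = b₀) (hβ0 : β 0 = 0)
    (ha : ∀ t : ℝ, 0 ≤ t →
      HasDerivAt a ((b t) ^ D * β t * (z - a t * (b t) ^ D * β t)) t)
    (hb : ∀ t : ℝ, 0 ≤ t →
      HasDerivAt b ((D : ℝ) * a t * (b t) ^ (D - 1) * β t * (z - a t * (b t) ^ D * β t)) t)
    (hβ : ∀ t : ℝ, 0 ≤ t →
      HasDerivAt β (a t * (b t) ^ D * (z - a t * (b t) ^ D * β t)) t) :
    ∀ t : ℝ, 0 ≤ t →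
      (a t) ^ 2 = lam + (β t) ^ 2 ∧ (b t) ^ 2 = b₀ ^ 2 + (D : ℝ) * (β t) ^ 2 ∧
      a t = Real.sqrt (lam + (β t) ^ 2) ∧ 0 < a t ∧
      b t = Real.sqrt (b₀ ^ 2 + (D : ℝ) * (β t) ^ 2) ∧ 0 < b t := by
  obtain ⟨E, rfl⟩ : ∃ E, D = E + 1 := ⟨D - 1, (Nat.succ_pred_eq_of_pos hD).symm⟩
  intro t ht
  -- conservation for a
  have keya : ∀ s ∈ Set.Icc (0:ℝ) t,
      (fun u => (a u) ^ 2 - (β u) ^ 2) s = (fun u => (a u) ^ 2 - (β u) ^ 2) 0 := by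
    apply constant_of_has_deriv_right_zero
    · intro s hs
      exact (((ha s hs.1).pow 2).sub ((hβ s hs.1).pow 2)).continuousAt.continuousWithinAt
    · intro s hs
      have h0 : HasDerivAt (fun u => (a u) ^ 2 - (β u) ^ 2) 0 s := by
        have h := ((ha s hs.1).fun_pow 2).fun_sub ((hβ s hs.1).fun_pow 2)
        refine h.congr_deriv ?_
        ring
      exact h0.hasDerivWithinAt
  have keyb : ∀ s ∈ Set.Icc (0:ℝ) t,
      (fun u => (b u) ^ 2 - ((E:ℝ)+1) * (β u) ^ 2) s
        = (fun u => (b u) ^ 2 - ((E:ℝ)+1) * (β u) ^ 2) 0 := by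
    apply constant_of_has_deriv_right_zero
    · intro s hs
      exact (((hb s hs.1).pow 2).sub
        (((hβ s hs.1).pow 2).const_mul ((E:ℝ)+1))).continuousAt.continuousWithinAt
    · intro s hs
      have h0 : HasDerivAt (fun u => (b u) ^ 2 - ((E:ℝ)+1) * (β u) ^ 2) 0 s := by
        have h := ((hb s hs.1).fun_pow 2).fun_sub (((hβ s hs.1).fun_pow 2).const_mul ((E:ℝ)+1))
        refine h.congr_deriv ?_
        simp only [Nat.add_sub_cancel]
        push_cast
        ring
      exact h0.hasDerivWithinAt
  have ha2 : ∀ s ∈ Set.Icc (0:ℝ) t, (a s) ^ 2 = lam + (β s) ^ 2 := by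
    intro s hs
    have := keya s hs
    simp only [ha0, hβ0] at this
    rw [Real.sq_sqrt hlam.le] at this
    linarith
  have hb2 : ∀ s ∈ Set.Icc (0:ℝ) t, (b s) ^ 2 = b₀ ^ 2 + ((E:ℝ)+1) * (β s) ^ 2 := by
    intro s hs
    have := keyb s hs
    simp only [hb0, hβ0] at this
    linarith
  have htmem : t ∈ Set.Icc (0:ℝ) t := ⟨ht, le_refl t⟩
  have hconta : ContinuousOn a (Set.Icc (0:ℝ) t) := fun s hs =>
    (ha s hs.1).continuousAt.continuousWithinAt
  have hcontb : ContinuousOn b (Set.Icc (0:ℝ) t) := fun s hs =>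
    (hb s hs.1).continuousAt.continuousWithinAt
  have hapos : 0 < a t := by
    by_contra h
    push_neg at h
    have hat : a t < 0 := by
      rcases lt_or_eq_of_le h with h' | h'
      · exact h'
      · exfalso; nlinarith [ha2 t htmem, sq_nonneg (β t)]
    have ha0pos : 0 < a 0 := by rw [ha0]; exact Real.sqrt_pos.mpr hlam
    have : (0:ℝ) ∈ a '' Set.Icc 0 t :=
      intermediate_value_Icc' ht hconta ⟨hat.le, ha0pos.le⟩
    obtain ⟨c, hc, hc0⟩ := this
    nlinarith [ha2 c hc, sq_nonneg (β c)]
  have hbpos : 0 < b t := by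
    by_contra h
    push_neg at h
    have hbt : b t < 0 := by
      rcases lt_or_eq_of_le h with h' | h'
      · exact h'
      · exfalso
        have := hb2 t htmem
        nlinarith [sq_nonneg (β t), Nat.cast_nonneg (α := ℝ) E]
    have hb0pos : 0 < b 0 := by rw [hb0]; exact hb₀
    have : (0:ℝ) ∈ b '' Set.Icc 0 t :=
      intermediate_value_Icc' ht hcontb ⟨hbt.le, hb0pos.le⟩
    obtain ⟨c, hc, hc0⟩ := this
    have := hb2 c hc
    nlinarith [sq_nonneg (β c), Nat.cast_nonneg (α := ℝ) E]
  have hA := ha2 t htmem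
  have hB := hb2 t htmem
  push_cast
  refine ⟨hA, by linarith, ?_, hapos, ?_, hbpos⟩
  · rw [← hA]; exact (Real.sqrt_sq hapos.le).symm
  · rw [show b₀ ^ 2 + ((E:ℝ)+1) * (β t) ^ 2 = (b t)^2 by linarith]
    exact (Real.sqrt_sq hbpos.le).symm
end

section
/- For the deep gradient flow with D ≥ 1 layers and z ≠ 0, define the times T̲₁ = (2^{(D+1)/2} b₀^D |z|)^{−1} and T̲₂ = (2^{(D+1)/2} √D λ^{1/2} b₀^{D−1} |z|)^{−1}. Then for all 0 ≤ t ≤ min(T̲₁, T̲₂): |β(t)| ≤ 2^{(D+1)/2} λ^{1/2} b₀^D |z| t and |θ(t)| ≤ 2^{D+1} λ b₀^{2D} |z| t. -/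
open Real

set_option maxHeartbeats 1000000

/-- initial (linear-growth) bounds for the deep gradient flow with `D ≥ 1`
layers and `z ≠ 0`, valid up to time `min(T̲₁, T̲₂)` where
`T̲₁ = (2^{(D+1)/2} b₀^D |z|)⁻¹` and `T̲₂ = (2^{(D+1)/2} √D λ^{1/2} b₀^{D−1} |z|)⁻¹`. -/
theorem deep_flow_noise_linear_bound
    (D : ℕ) (hD : 1 ≤ D) (lam b₀ z : ℝ) (hlam : 0 < lam) (hb₀ : 0 < b₀) (hz : z ≠ 0)
    (a b β : ℝ → ℝ)
    (ha0 : a 0 = Real.sqrt lam) (hb0 : b 0 = b₀) (hβ0 : β 0 = 0)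
    (ha : ∀ t : ℝ, 0 ≤ t →
      HasDerivAt a ((b t) ^ D * β t * (z - a t * (b t) ^ D * β t)) t)
    (hb : ∀ t : ℝ, 0 ≤ t →
      HasDerivAt b ((D : ℝ) * a t * (b t) ^ (D - 1) * β t * (z - a t * (b t) ^ D * β t)) t)
    (hβ : ∀ t : ℝ, 0 ≤ t →
      HasDerivAt β (a t * (b t) ^ D * (z - a t * (b t) ^ D * β t)) t) :
    ∀ t : ℝ, 0 ≤ t →
      t ≤ min (((2 : ℝ) ^ (((D : ℝ) + 1) / 2) * b₀ ^ D * |z|)⁻¹)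
              (((2 : ℝ) ^ (((D : ℝ) + 1) / 2) * Real.sqrt (D : ℝ) * Real.sqrt lam *
                  b₀ ^ (D - 1) * |z|)⁻¹) →
      |β t| ≤ (2 : ℝ) ^ (((D : ℝ) + 1) / 2) * Real.sqrt lam * b₀ ^ D * |z| * t ∧
      |a t * (b t) ^ D * β t| ≤ 2 ^ (D + 1) * lam * b₀ ^ (2 * D) * |z| * t := by
  obtain ⟨d, rfl⟩ : ∃ d, D = d + 1 := ⟨D - 1, by omega⟩
  simp only [Nat.add_sub_cancel] at hb ⊢
  set p : ℝ := (((d + 1 : ℕ) : ℝ) + 1) / 2 with hp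
  set Mz : ℝ := (2 : ℝ) ^ p * Real.sqrt lam * b₀ ^ (d + 1) with hMzdef
  have h2pos : (0 : ℝ) < (2 : ℝ) ^ p := Real.rpow_pos_of_pos (by norm_num) p
  have hMz : 0 < Mz := by
    rw [hMzdef]; positivity
  have hzne : |z| ≠ 0 := by simpa using hz
  have hzpos : 0 < |z| := abs_pos.mpr hz
  -- derivative of θ = a b^D β
  have hθ : ∀ t : ℝ, 0 ≤ t → HasDerivAt (fun s => a s * b s ^ (d + 1) * β s)
      ((z - a t * b t ^ (d + 1) * β t) *
        (b t ^ (2 * d + 2) * β t ^ 2 + ((d : ℝ) + 1) ^ 2 * a t ^ 2 * b t ^ (2 * d) * β t ^ 2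
          + a t ^ 2 * b t ^ (2 * d + 2))) t := by
    intro t ht
    have h := ((ha t ht).fun_mul ((hb t ht).fun_pow (d + 1))).fun_mul (hβ t ht)
    refine h.congr_deriv ?_
    simp only [Nat.add_sub_cancel]
    push_cast
    ring
  -- the quantity (z-θ)^2 is nonincreasing
  have hsq : ∀ t : ℝ, 0 ≤ t → HasDerivAt (fun s => (z - a s * b s ^ (d + 1) * β s) ^ 2)
      (-(2 * (z - a t * b t ^ (d + 1) * β t) ^ 2 *
        (b t ^ (2 * d + 2) * β t ^ 2 + ((d : ℝ) + 1) ^ 2 * a t ^ 2 * b t ^ (2 * d) * β t ^ 2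
          + a t ^ 2 * b t ^ (2 * d + 2)))) t := by
    intro t ht
    have h := ((hasDerivAt_const t z).fun_sub (hθ t ht)).fun_pow 2
    refine h.congr_deriv ?_
    ring
  have hanti : AntitoneOn (fun s => (z - a s * b s ^ (d + 1) * β s) ^ 2) (Set.Ici 0) := by
    apply antitoneOn_of_deriv_nonpos (convex_Ici 0)
    · intro x hx
      exact (hsq x hx).continuousAt.continuousWithinAt
    · intro x hx
      rw [interior_Ici] at hx
      exact (hsq x hx.le).differentiableAt.differentiableWithinAt
    · intro x hx
      rw [interior_Ici] at hx
      rw [(hsq x hx.le).deriv]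
      have hg : (0 : ℝ) ≤ b x ^ (2 * d + 2) * β x ^ 2
          + ((d : ℝ) + 1) ^ 2 * a x ^ 2 * b x ^ (2 * d) * β x ^ 2
          + a x ^ 2 * b x ^ (2 * d + 2) := by
        have : b x ^ (2 * d + 2) * β x ^ 2
            + ((d : ℝ) + 1) ^ 2 * a x ^ 2 * b x ^ (2 * d) * β x ^ 2
            + a x ^ 2 * b x ^ (2 * d + 2)
            = (b x ^ (d + 1) * β x) ^ 2 + (((d : ℝ) + 1) * a x * b x ^ d * β x) ^ 2
              + (a x * b x ^ (d + 1)) ^ 2 := by ring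
        rw [this]; positivity
      have h2 : (0 : ℝ) ≤ (z - a x * b x ^ (d + 1) * β x) ^ 2 := sq_nonneg _
      nlinarith
  have hzb : ∀ t : ℝ, 0 ≤ t → |z - a t * b t ^ (d + 1) * β t| ≤ |z| := by
    intro t ht
    have h := hanti (Set.self_mem_Ici) (Set.mem_Ici.mpr ht) ht
    simp only [hβ0, mul_zero, sub_zero] at h
    calc |z - a t * b t ^ (d + 1) * β t|
        = Real.sqrt ((z - a t * b t ^ (d + 1) * β t) ^ 2) := (Real.sqrt_sq_eq_abs _).symm
      _ ≤ Real.sqrt (z ^ 2) := Real.sqrt_le_sqrt h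
      _ = |z| := Real.sqrt_sq_eq_abs z
  -- conservation laws
  have hconst : ∀ f : ℝ → ℝ, (∀ s : ℝ, 0 ≤ s → HasDerivAt f 0 s) →
      ∀ s : ℝ, 0 ≤ s → f s = f 0 := by
    intro f hf s hs
    exact constant_of_has_deriv_right_zero
      (fun x hx => (hf x hx.1).continuousAt.continuousWithinAt)
      (fun x hx => (hf x hx.1).hasDerivWithinAt) s ⟨hs, le_refl s⟩
  have ha2 : ∀ s : ℝ, 0 ≤ s → a s ^ 2 = lam + β s ^ 2 := by
    intro s hs
    have hder : ∀ u : ℝ, 0 ≤ u → HasDerivAt (fun v => a v ^ 2 - β v ^ 2) 0 u := by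
      intro u hu
      have h := ((ha u hu).fun_pow 2).fun_sub ((hβ u hu).fun_pow 2)
      refine h.congr_deriv ?_
      ring
    have h := hconst _ hder s hs
    simp only [ha0, hβ0] at h
    have h0 : Real.sqrt lam ^ 2 = lam := Real.sq_sqrt hlam.le
    nlinarith [h]
  have hb2 : ∀ s : ℝ, 0 ≤ s → b s ^ 2 = b₀ ^ 2 + ((d : ℝ) + 1) * β s ^ 2 := by
    intro s hs
    have hder : ∀ u : ℝ, 0 ≤ u →
        HasDerivAt (fun v => b v ^ 2 - ((d : ℝ) + 1) * β v ^ 2) 0 u := by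
      intro u hu
      have h := ((hb u hu).fun_pow 2).fun_sub (((hβ u hu).fun_pow 2).const_mul ((d : ℝ) + 1))
      refine h.congr_deriv ?_
      push_cast
      ring
    have h := hconst _ hder s hs
    simp only [hb0, hβ0] at h
    nlinarith [h]
  set K : ℝ := min lam (b₀ ^ 2 / ((d : ℝ) + 1)) with hKdef
  have hK : 0 < K := by
    apply lt_min hlam
    positivity
  have h2p : ((2 : ℝ) ^ p) ^ 2 = (2 : ℝ) ^ (d + 1 + 1 : ℕ) := by
    rw [← Real.rpow_natCast ((2 : ℝ) ^ p) 2, ← Real.rpow_mul (by norm_num : (0:ℝ) ≤ 2),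
      ← Real.rpow_natCast (2 : ℝ) (d + 1 + 1)]
    congr 1
    rw [hp]
    push_cast
    ring
  have hMz2 : Mz ^ 2 = 2 ^ (d + 1 + 1 : ℕ) * lam * b₀ ^ (2 * (d + 1)) := by
    rw [hMzdef, mul_pow, mul_pow, h2p, Real.sq_sqrt hlam.le]
    ring
  -- bound on |a b^D| while β² ≤ K
  have habD : ∀ s : ℝ, 0 ≤ s → β s ^ 2 ≤ K → |a s * b s ^ (d + 1)| ≤ Mz := by
    intro s hs hK2
    have h1 : β s ^ 2 ≤ lam := le_trans hK2 (min_le_left _ _)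
    have h2 : ((d : ℝ) + 1) * β s ^ 2 ≤ b₀ ^ 2 := by
      have h3 : β s ^ 2 ≤ b₀ ^ 2 / ((d : ℝ) + 1) := le_trans hK2 (min_le_right _ _)
      have h4 : (0 : ℝ) < (d : ℝ) + 1 := by positivity
      rw [le_div_iff₀ h4] at h3
      linarith [h3]
    have hsqb : (a s * b s ^ (d + 1)) ^ 2 ≤ 2 ^ (d + 1 + 1 : ℕ) * lam * b₀ ^ (2 * (d + 1)) := by
      have e1 : (a s * b s ^ (d + 1)) ^ 2 = a s ^ 2 * (b s ^ 2) ^ (d + 1) := by ring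
      rw [e1, ha2 s hs, hb2 s hs]
      have e2 : (b₀ ^ 2 + ((d : ℝ) + 1) * β s ^ 2) ^ (d + 1) ≤ (2 * b₀ ^ 2) ^ (d + 1) := by
        apply pow_le_pow_left₀ (by positivity) (by linarith)
      have e3 : lam + β s ^ 2 ≤ 2 * lam := by linarith
      calc (lam + β s ^ 2) * (b₀ ^ 2 + ((d : ℝ) + 1) * β s ^ 2) ^ (d + 1)
          ≤ 2 * lam * (2 * b₀ ^ 2) ^ (d + 1) := by
            apply mul_le_mul e3 e2 (by positivity) (by positivity)
        _ = 2 ^ (d + 1 + 1 : ℕ) * lam * b₀ ^ (2 * (d + 1)) := by ring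
    calc |a s * b s ^ (d + 1)| = Real.sqrt ((a s * b s ^ (d + 1)) ^ 2) :=
          (Real.sqrt_sq_eq_abs _).symm
      _ ≤ Real.sqrt (Mz ^ 2) := Real.sqrt_le_sqrt (by rw [hMz2]; exact hsqb)
      _ = Mz := Real.sqrt_sq hMz.le
  -- mean value bound
  have hMVT : ∀ u : ℝ, 0 ≤ u → (∀ s : ℝ, 0 ≤ s → s < u → β s ^ 2 ≤ K) →
      |β u| ≤ Mz * |z| * u := by
    intro u hu hsmall
    have h := norm_image_sub_le_of_norm_deriv_right_le_segment
      (f := β) (f' := fun s => a s * b s ^ (d + 1) * (z - a s * b s ^ (d + 1) * β s))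
      (C := Mz * |z|)
      (fun x hx => (hβ x hx.1).continuousAt.continuousWithinAt)
      (fun x hx => (hβ x hx.1).hasDerivWithinAt)
      (fun x hx => by
        have hx0 : (0 : ℝ) ≤ x := hx.1
        have hb1 := habD x hx0 (hsmall x hx0 hx.2)
        have hb2' := hzb x hx0
        calc ‖a x * b x ^ (d + 1) * (z - a x * b x ^ (d + 1) * β x)‖
            = |a x * b x ^ (d + 1)| * |z - a x * b x ^ (d + 1) * β x| := by
              rw [Real.norm_eq_abs, abs_mul]
          _ ≤ Mz * |z| := mul_le_mul hb1 hb2' (abs_nonneg _) hMz.le)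
      u ⟨hu, le_refl u⟩
    rw [hβ0, sub_zero, sub_zero, Real.norm_eq_abs] at h
    exact h
  set T1 : ℝ := ((2 : ℝ) ^ p * b₀ ^ (d + 1) * |z|)⁻¹ with hT1
  set T2 : ℝ := ((2 : ℝ) ^ p * Real.sqrt ((d + 1 : ℕ) : ℝ) * Real.sqrt lam * b₀ ^ d * |z|)⁻¹
    with hT2
  have hcastd : ((d + 1 : ℕ) : ℝ) = (d : ℝ) + 1 := by push_cast; ring
  have hsqrtD : Real.sqrt ((d + 1 : ℕ) : ℝ) ≠ 0 := by
    rw [hcastd]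
    positivity
  have hsqrtlam : Real.sqrt lam ≠ 0 := by positivity
  have hMT1 : Mz * |z| * T1 = Real.sqrt lam := by
    rw [hT1, hMzdef]
    field_simp
  have hMT2 : Mz * |z| * T2 = b₀ / Real.sqrt ((d + 1 : ℕ) : ℝ) := by
    rw [hT2, hMzdef]
    field_simp
    ring
  have hMT2sq : (Mz * |z| * T2) ^ 2 = b₀ ^ 2 / ((d : ℝ) + 1) := by
    rw [hMT2, div_pow, Real.sq_sqrt (by positivity : (0:ℝ) ≤ ((d + 1 : ℕ) : ℝ)), hcastd]
  have hMtK : ∀ t : ℝ, 0 ≤ t → t ≤ min T1 T2 → (Mz * |z| * t) ^ 2 ≤ K := by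
    intro t ht htT
    have hMznn : 0 ≤ Mz * |z| := by positivity
    apply le_min
    · have h1 : Mz * |z| * t ≤ Mz * |z| * T1 :=
        mul_le_mul_of_nonneg_left (le_trans htT (min_le_left _ _)) hMznn
      have h2 : (Mz * |z| * t) ^ 2 ≤ (Mz * |z| * T1) ^ 2 :=
        pow_le_pow_left₀ (by positivity) h1 2
      rw [hMT1, Real.sq_sqrt hlam.le] at h2
      exact h2
    · have h1 : Mz * |z| * t ≤ Mz * |z| * T2 :=
        mul_le_mul_of_nonneg_left (le_trans htT (min_le_right _ _)) hMznn
      have h2 : (Mz * |z| * t) ^ 2 ≤ (Mz * |z| * T2) ^ 2 :=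
        pow_le_pow_left₀ (by positivity) h1 2
      rw [hMT2sq] at h2
      exact h2
  -- bootstrap: β² ≤ K on [0, T]
  have hβK : ∀ t : ℝ, 0 ≤ t → t ≤ min T1 T2 → β t ^ 2 ≤ K := by
    by_contra hcon
    push_neg at hcon
    obtain ⟨t₀, ht₀, ht₀T, hKlt⟩ := hcon
    set E : Set ℝ := {s : ℝ | s ∈ Set.Icc 0 t₀ ∧ K ≤ β s ^ 2} with hE
    have hEne : t₀ ∈ E := ⟨⟨ht₀, le_refl _⟩, hKlt.le⟩
    have hEb : BddBelow E := ⟨0, fun x hx => hx.1.1⟩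
    have hEclosed : IsClosed E := by
      have hcont : ContinuousOn β (Set.Icc 0 t₀) := fun x hx =>
        (hβ x hx.1).continuousAt.continuousWithinAt
      have hEeq : E = Set.Icc 0 t₀ ∩ β ⁻¹' {y : ℝ | K ≤ y ^ 2} := by
        ext x
        simp [hE, Set.mem_Icc, and_comm]
      rw [hEeq]
      exact hcont.preimage_isClosed_of_isClosed isClosed_Icc
        (isClosed_le continuous_const (continuous_pow 2))
    set u := sInf E with hu
    have huE : u ∈ E := hEclosed.csInf_mem ⟨t₀, hEne⟩ hEb
    have hu0 : 0 ≤ u := huE.1.1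
    have hut₀ : u ≤ t₀ := huE.1.2
    have hsmall : ∀ s : ℝ, 0 ≤ s → s < u → β s ^ 2 ≤ K := by
      intro s hs hsu
      by_contra hc
      push_neg at hc
      exact (notMem_of_lt_csInf hsu hEb) ⟨⟨hs, hsu.le.trans hut₀⟩, hc.le⟩
    have hβu := hMVT u hu0 hsmall
    have hβu2 : β u ^ 2 ≤ (Mz * |z| * u) ^ 2 := by
      rw [← sq_abs]
      exact pow_le_pow_left₀ (abs_nonneg _) hβu 2
    have huT : u ≤ min T1 T2 := le_trans hut₀ ht₀T
    have hT0 : (0 : ℝ) ≤ min T1 T2 := le_trans ht₀ ht₀T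
    have hMT := hMtK (min T1 T2) hT0 (le_refl _)
    rcases lt_or_eq_of_le huT with hlt | heq
    · have hMu : Mz * |z| * u < Mz * |z| * min T1 T2 :=
        mul_lt_mul_of_pos_left hlt (by positivity)
      have h2 : (Mz * |z| * u) ^ 2 < (Mz * |z| * min T1 T2) ^ 2 :=
        pow_lt_pow_left₀ hMu (by positivity) (by norm_num)
      linarith [huE.2]
    · have ht₀u : t₀ = u := le_antisymm (heq ▸ ht₀T) hut₀
      rw [ht₀u, heq] at hKlt
      rw [heq] at hβu2
      linarith
  -- conclusion
  intro t ht htT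
  have hβt : |β t| ≤ Mz * |z| * t :=
    hMVT t ht (fun s hs hst => hβK s hs (le_trans hst.le htT))
  constructor
  · have heq : Mz * |z| * t = (2 : ℝ) ^ p * Real.sqrt lam * b₀ ^ (d + 1) * |z| * t := by
      rw [hMzdef]
    linarith [hβt, heq]
  · have habs := habD t ht (hβK t ht htT)
    have h1 : |a t * b t ^ (d + 1) * β t| ≤ Mz * (Mz * |z| * t) := by
      rw [abs_mul]
      exact mul_le_mul habs hβt (abs_nonneg _) hMz.le
    have h2 : Mz * (Mz * |z| * t) = 2 ^ (d + 1 + 1) * lam * b₀ ^ (2 * (d + 1)) * |z| * t := by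
      have : Mz * (Mz * |z| * t) = Mz ^ 2 * |z| * t := by ring
      rw [this, hMz2]
    linarith [h1, h2]
end

section
/- For the deep gradient flow with D ≥ 1 layers and z ≠ 0, assume additionally λ^{1/2} ≤ b₀/√D. With T̲₁ = (2^{(D+1)/2} b₀^D |z|)^{−1} and T̲^{(1,2)} = (1 + ln(b₀/(√D λ^{1/2}))) · T̲₁, for all 0 ≤ t ≤ T̲^{(1,2)}: |β(t)| ≤ λ^{1/2} exp( 2^{(D+1)/2} b₀^D |z| (t − T̲₁)⁺ ) and |θ(t)| ≤ 2^{(D+1)/2} λ b₀^D exp( 2^{(D+3)/2} b₀^D |z| (t − T̲₁)⁺ ), where x⁺ = max(x, 0). -/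
open Real Set


private lemma pos_on_of_ne_zero {f : ℝ → ℝ} {τ : ℝ} (hτ : 0 ≤ τ)
    (hc : ContinuousOn f (Set.Icc 0 τ)) (h0 : 0 < f 0)
    (hne : ∀ s ∈ Set.Icc (0:ℝ) τ, f s ≠ 0) : 0 < f τ := by
  by_contra h
  push_neg at h
  have h0' : (0:ℝ) ∈ Set.Icc (f τ) (f 0) := ⟨h, h0.le⟩
  obtain ⟨s, hs, hfs⟩ := intermediate_value_Icc' hτ hc h0'
  exact hne s hs hfs

private lemma gron_upper {f p : ℝ → ℝ} {K τ : ℝ} (hτ : 0 ≤ τ)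
    (hf : ∀ s ∈ Set.Icc (0:ℝ) τ, HasDerivAt f (p s * f s) s)
    (hp : ∀ s ∈ Set.Icc (0:ℝ) τ, |p s| ≤ K)
    (hpos : ∀ s ∈ Set.Icc (0:ℝ) τ, 0 < f s) :
    f τ ≤ f 0 * Real.exp (K * τ) := by
  have hgd : ∀ s ∈ Set.Icc (0:ℝ) τ, HasDerivAt (fun r => f r * Real.exp (-(K*r)))
      ((p s * f s) * Real.exp (-(K*s)) + f s * (Real.exp (-(K*s)) * (-K))) s := by
    intro s hs
    have h1 : HasDerivAt (fun r : ℝ => -(K*r)) (-K) s := by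
      simpa using ((hasDerivAt_id s).const_mul (-K))
    exact (hf s hs).mul h1.exp
  have hanti : AntitoneOn (fun r => f r * Real.exp (-(K*r))) (Set.Icc 0 τ) := by
    apply antitoneOn_of_deriv_nonpos (convex_Icc 0 τ)
    · exact fun s hs => ((hgd s hs).continuousAt).continuousWithinAt
    · intro s hs
      rw [interior_Icc] at hs
      exact ((hgd s (Ioo_subset_Icc_self hs)).differentiableAt).differentiableWithinAt
    · intro s hs
      rw [interior_Icc] at hs
      have hs' := Ioo_subset_Icc_self hs
      rw [(hgd s hs').deriv]
      have h1 := hpos s hs'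
      have h2 := (abs_le.mp (hp s hs')).2
      have h3 : (0:ℝ) < Real.exp (-(K*s)) := Real.exp_pos _
      nlinarith [mul_nonneg (mul_nonneg (sub_nonneg.mpr h2) h1.le) h3.le]
  have hle := hanti (Set.left_mem_Icc.mpr hτ) (Set.right_mem_Icc.mpr hτ) hτ
  have h4 : Real.exp (-(K*τ)) * Real.exp (K*τ) = 1 := by
    rw [← Real.exp_add]; simp
  have h5 : f τ * Real.exp (-(K*τ)) ≤ f 0 := by simpa using hle
  calc f τ = f τ * Real.exp (-(K*τ)) * Real.exp (K*τ) := by rw [mul_assoc, h4, mul_one]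
    _ ≤ f 0 * Real.exp (K*τ) := mul_le_mul_of_nonneg_right h5 (Real.exp_pos _).le

private lemma gron_lower {f p : ℝ → ℝ} {K τ : ℝ} (hτ : 0 ≤ τ)
    (hf : ∀ s ∈ Set.Icc (0:ℝ) τ, HasDerivAt f (p s * f s) s)
    (hp : ∀ s ∈ Set.Icc (0:ℝ) τ, |p s| ≤ K)
    (hpos : ∀ s ∈ Set.Icc (0:ℝ) τ, 0 < f s) :
    f 0 * Real.exp (-(K * τ)) ≤ f τ := by
  have hgd : ∀ s ∈ Set.Icc (0:ℝ) τ, HasDerivAt (fun r => f r * Real.exp (K*r))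
      ((p s * f s) * Real.exp (K*s) + f s * (Real.exp (K*s) * K)) s := by
    intro s hs
    have h1 : HasDerivAt (fun r : ℝ => K*r) K s := by
      simpa using ((hasDerivAt_id s).const_mul K)
    exact (hf s hs).mul h1.exp
  have hmono : MonotoneOn (fun r => f r * Real.exp (K*r)) (Set.Icc 0 τ) := by
    apply monotoneOn_of_deriv_nonneg (convex_Icc 0 τ)
    · exact fun s hs => ((hgd s hs).continuousAt).continuousWithinAt
    · intro s hs
      rw [interior_Icc] at hs
      exact ((hgd s (Ioo_subset_Icc_self hs)).differentiableAt).differentiableWithinAt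
    · intro s hs
      rw [interior_Icc] at hs
      have hs' := Ioo_subset_Icc_self hs
      rw [(hgd s hs').deriv]
      have h1 := hpos s hs'
      have h2 := (abs_le.mp (hp s hs')).1
      have h3 : (0:ℝ) < Real.exp (K*s) := Real.exp_pos _
      nlinarith [mul_nonneg (mul_nonneg (sub_nonneg.mpr h2) h1.le) h3.le]
  have hle := hmono (Set.left_mem_Icc.mpr hτ) (Set.right_mem_Icc.mpr hτ) hτ
  have h4 : Real.exp (-(K*τ)) * Real.exp (K*τ) = 1 := by
    rw [← Real.exp_add]; simp
  have h5 : f 0 ≤ f τ * Real.exp (K*τ) := by simpa using hle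
  calc f 0 * Real.exp (-(K*τ)) ≤ f τ * Real.exp (K*τ) * Real.exp (-(K*τ)) :=
        mul_le_mul_of_nonneg_right h5 (Real.exp_pos _).le
    _ = f τ := by rw [mul_assoc, mul_comm (Real.exp (K*τ)), h4, mul_one]

private lemma exp_34 : Real.exp (3/4) - Real.exp (-(3/4)) < 2 := by
  have h1 : (29:ℝ)/32 ≤ Real.exp (-(3/32 : ℝ)) := by
    have := Real.add_one_le_exp (-(3/32):ℝ); linarith
  have h2 : Real.exp ((3/32:ℝ)) ≤ 32/29 := by
    have hmul : Real.exp ((3/32:ℝ)) * Real.exp (-(3/32:ℝ)) = 1 := by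
      rw [← Real.exp_add]; norm_num
    nlinarith [Real.exp_pos ((3/32):ℝ), Real.exp_pos (-(3/32):ℝ)]
  have h3 : Real.exp ((3/4):ℝ) = Real.exp ((3/32:ℝ)) ^ (8:ℕ) := by
    rw [← Real.exp_nat_mul]; norm_num
  have h4 : Real.exp ((3/4):ℝ) ≤ (32/29:ℝ)^(8:ℕ) := by
    rw [h3]; exact pow_le_pow_left₀ (Real.exp_pos _).le h2 8
  have h5 : (1:ℝ)/4 ≤ Real.exp (-(3/4:ℝ)) := by
    have := Real.add_one_le_exp (-(3/4):ℝ); linarith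
  have h6 : ((32:ℝ)/29)^(8:ℕ) < 2.25 := by norm_num
  linarith

private lemma key_ineq {x : ℝ} (hx : 0 ≤ x) :
    Real.exp (x / Real.sqrt 2) - Real.exp (-(x / Real.sqrt 2)) <
      2 * Real.exp (max (x - 1) 0) := by
  have hs2sq : Real.sqrt 2 ^ 2 = 2 := Real.sq_sqrt (by norm_num)
  have hs2nn : (0:ℝ) ≤ Real.sqrt 2 := Real.sqrt_nonneg 2
  have hs2a : (1.4142:ℝ) < Real.sqrt 2 := by nlinarith
  have hs2b : Real.sqrt 2 < 1.41422 := by nlinarith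
  have hspos : (0:ℝ) < Real.sqrt 2 := by linarith
  rcases le_or_gt x 1.06 with hc | hc
  · have hxr : x / Real.sqrt 2 ≤ 3/4 := by
      rw [div_le_iff₀ hspos]; nlinarith
    have h0 : 0 ≤ x / Real.sqrt 2 := div_nonneg hx hspos.le
    have e1 : Real.exp (x / Real.sqrt 2) ≤ Real.exp (3/4) := Real.exp_le_exp.mpr hxr
    have e2 : Real.exp (-(3/4:ℝ)) ≤ Real.exp (-(x / Real.sqrt 2)) :=
      Real.exp_le_exp.mpr (by linarith)
    have e3 : (1:ℝ) ≤ Real.exp (max (x-1) 0) := by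
      rw [← Real.exp_zero]; exact Real.exp_le_exp.mpr (le_max_right _ _)
    have := exp_34
    linarith
  · have hmax : max (x-1) 0 = x - 1 := max_eq_left (by linarith)
    rw [hmax]
    have hlog : (0.6931471803:ℝ) < Real.log 2 := Real.log_two_gt_d9
    have hlog2 : Real.log 2 < 0.6931471808 := Real.log_two_lt_d9
    have hkey : x / Real.sqrt 2 ≤ Real.log 2 + (x - 1) := by
      rw [div_le_iff₀ hspos]
      nlinarith [mul_pos (by linarith : (0:ℝ) < x - 1.06) (by linarith : (0:ℝ) < Real.sqrt 2 - 1),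
        mul_pos (by linarith : (0:ℝ) < Real.log 2 - 0.6931471803) (by linarith : (0:ℝ) < Real.sqrt 2 - 1.4142)]
    have h7 : Real.exp (x / Real.sqrt 2) ≤ Real.exp (Real.log 2 + (x-1)) :=
      Real.exp_le_exp.mpr hkey
    rw [Real.exp_add, Real.exp_log (by norm_num : (0:ℝ) < 2)] at h7
    have h8 := Real.exp_pos (-(x / Real.sqrt 2))
    linarith


set_option maxHeartbeats 1000000 in
/-- exponential-growth bounds for the deep gradient flow with `D ≥ 1`
layers, `z ≠ 0` and `λ^{1/2} ≤ b₀/√D`, valid up to time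
`T̲^{(1,2)} = (1 + ln(b₀/(√D λ^{1/2}))) T̲₁` where `T̲₁ = (2^{(D+1)/2} b₀^D |z|)⁻¹`. -/
theorem deep_flow_noise_exp_bound
    (D : ℕ) (hD : 1 ≤ D) (lam b₀ z : ℝ) (hlam : 0 < lam) (hb₀ : 0 < b₀) (hz : z ≠ 0)
    (hsmall : Real.sqrt lam ≤ b₀ / Real.sqrt (D : ℝ))
    (a b β : ℝ → ℝ)
    (ha0 : a 0 = Real.sqrt lam) (hb0 : b 0 = b₀) (hβ0 : β 0 = 0)
    (ha : ∀ t : ℝ, 0 ≤ t →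
      HasDerivAt a ((b t) ^ D * β t * (z - a t * (b t) ^ D * β t)) t)
    (hb : ∀ t : ℝ, 0 ≤ t →
      HasDerivAt b ((D : ℝ) * a t * (b t) ^ (D - 1) * β t * (z - a t * (b t) ^ D * β t)) t)
    (hβ : ∀ t : ℝ, 0 ≤ t →
      HasDerivAt β (a t * (b t) ^ D * (z - a t * (b t) ^ D * β t)) t) :
    ∀ t : ℝ, 0 ≤ t →
      t ≤ (1 + Real.log (b₀ / (Real.sqrt (D : ℝ) * Real.sqrt lam))) *
            ((2 : ℝ) ^ (((D : ℝ) + 1) / 2) * b₀ ^ D * |z|)⁻¹ →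
      |β t| ≤ Real.sqrt lam *
          Real.exp ((2 : ℝ) ^ (((D : ℝ) + 1) / 2) * b₀ ^ D * |z| *
            max (t - ((2 : ℝ) ^ (((D : ℝ) + 1) / 2) * b₀ ^ D * |z|)⁻¹) 0) ∧
      |a t * (b t) ^ D * β t| ≤ (2 : ℝ) ^ (((D : ℝ) + 1) / 2) * lam * b₀ ^ D *
          Real.exp ((2 : ℝ) ^ (((D : ℝ) + 3) / 2) * b₀ ^ D * |z| *
            max (t - ((2 : ℝ) ^ (((D : ℝ) + 1) / 2) * b₀ ^ D * |z|)⁻¹) 0) := by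
  intro t ht hT
  have hε : 0 < Real.sqrt lam := Real.sqrt_pos.mpr hlam
  set ε := Real.sqrt lam with hεdef
  have hεsq : ε ^ 2 = lam := Real.sq_sqrt hlam.le
  have hs2sq : Real.sqrt 2 ^ 2 = 2 := Real.sq_sqrt (by norm_num)
  have hs2pos : (0:ℝ) < Real.sqrt 2 := Real.sqrt_pos.mpr (by norm_num)
  set s2 := Real.sqrt 2 with hs2def
  have hzpos : (0:ℝ) < |z| := abs_pos.mpr hz
  have hDpos : (0:ℝ) < (D:ℝ) := by exact_mod_cast Nat.lt_of_lt_of_le Nat.zero_lt_one hD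
  set κ := s2 ^ D * b₀ ^ D * |z| with hκdef
  have hκpos : 0 < κ := by positivity
  set c0 := (2 : ℝ) ^ (((D : ℝ) + 1) / 2) * b₀ ^ D * |z| with hc0def
  have hpow1 : (2 : ℝ) ^ (((D : ℝ) + 1) / 2) = s2 * s2 ^ D := by
    have hs : s2 = (2:ℝ) ^ ((1:ℝ)/2) := Real.sqrt_eq_rpow 2
    rw [hs, ← Real.rpow_natCast ((2:ℝ) ^ ((1:ℝ)/2)) D,
      ← Real.rpow_mul (by norm_num : (0:ℝ) ≤ 2),
      ← Real.rpow_add (by norm_num : (0:ℝ) < 2)]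
    congr 1
    ring
  have hc0 : c0 = s2 * κ := by rw [hc0def, hκdef, hpow1]; ring
  have hc0pos : 0 < c0 := by rw [hc0]; positivity
  -- conservation laws
  have hconsta : ∀ τ, 0 ≤ τ → a τ ^ 2 - β τ ^ 2 = lam := by
    intro τ hτ
    have key := constant_of_has_deriv_right_zero
      (f := fun r => a r ^ 2 - β r ^ 2) (a := 0) (b := τ)
      (fun x hx => (((ha x hx.1).pow 2).sub ((hβ x hx.1).pow 2)).continuousAt.continuousWithinAt)
      (fun x hx => by
        have h := ((ha x hx.1).fun_pow 2).fun_sub ((hβ x hx.1).fun_pow 2)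
        have h0 : HasDerivAt (fun r => a r ^ 2 - β r ^ 2) 0 x := by
          refine h.congr_deriv ?_; symm; ring
        exact h0.hasDerivWithinAt)
      τ (Set.mem_Icc.mpr ⟨hτ, le_refl τ⟩)
    simp only [ha0, hβ0] at key
    rw [key]
    simpa using hεsq
  have hconstb : ∀ τ, 0 ≤ τ → b τ ^ 2 = b₀ ^ 2 + (D:ℝ) * β τ ^ 2 := by
    intro τ hτ
    have key := constant_of_has_deriv_right_zero
      (f := fun r => b r ^ 2 - (D:ℝ) * β r ^ 2) (a := 0) (b := τ)
      (fun x hx => (((hb x hx.1).pow 2).sub (((hβ x hx.1).pow 2).const_mul (D:ℝ))).continuousAt.continuousWithinAt)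
      (fun x hx => by
        have h := ((hb x hx.1).fun_pow 2).fun_sub (((hβ x hx.1).fun_pow 2).const_mul (D:ℝ))
        have h0 : HasDerivAt (fun r => b r ^ 2 - (D:ℝ) * β r ^ 2) 0 x := by
          refine h.congr_deriv ?_; symm
          have hbp : b x ^ (D-1) * b x = b x ^ D := by
            rw [← pow_succ]; congr 1; omega
          linear_combination (-2*(D:ℝ)*(a x)*(β x)*(z - a x * b x ^ D * β x)) * hbp
        exact h0.hasDerivWithinAt)
      τ (Set.mem_Icc.mpr ⟨hτ, le_refl τ⟩)
    simp only [hb0, hβ0] at key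
    linarith [key]
  -- |z - θ| ≤ |z|
  have hwd : ∀ x, 0 ≤ x → HasDerivAt (fun r => (z - a r * b r ^ D * β r) ^ 2)
      (-2 * ((b x ^ D * β x * (z - a x * b x ^ D * β x)) ^ 2 +
        ((D:ℝ) * a x * b x ^ (D-1) * β x * (z - a x * b x ^ D * β x)) ^ 2 +
        (a x * b x ^ D * (z - a x * b x ^ D * β x)) ^ 2)) x := by
    intro x hx
    have h := ((hasDerivAt_const x z).fun_sub
      (((ha x hx).fun_mul ((hb x hx).fun_pow D)).fun_mul (hβ x hx))).fun_pow 2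
    refine h.congr_deriv ?_; symm
    push_cast
    ring
  have hWanti : AntitoneOn (fun r => (z - a r * b r ^ D * β r) ^ 2) (Set.Ici 0) := by
    apply antitoneOn_of_deriv_nonpos (convex_Ici 0)
    · exact fun x hx => (hwd x hx).continuousAt.continuousWithinAt
    · intro x hx
      rw [interior_Ici] at hx
      exact (hwd x hx.le).differentiableAt.differentiableWithinAt
    · intro x hx
      rw [interior_Ici] at hx
      rw [(hwd x hx.le).deriv]
      have h0 : (0:ℝ) ≤ (b x ^ D * β x * (z - a x * b x ^ D * β x)) ^ 2 +
          ((D:ℝ) * a x * b x ^ (D-1) * β x * (z - a x * b x ^ D * β x)) ^ 2 +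
          (a x * b x ^ D * (z - a x * b x ^ D * β x)) ^ 2 := by positivity
      linarith
  have hwabs : ∀ τ, 0 ≤ τ → |z - a τ * b τ ^ D * β τ| ≤ |z| := by
    intro τ hτ
    have h1 := hWanti (Set.self_mem_Ici) (Set.mem_Ici.mpr hτ) hτ
    simp only [hβ0, mul_zero, sub_zero] at h1
    have h2 := Real.sqrt_le_sqrt h1
    rwa [Real.sqrt_sq_eq_abs, Real.sqrt_sq_eq_abs] at h2
  -- positivity
  have hbpos : ∀ τ, 0 ≤ τ → 0 < b τ := by
    intro τ hτ
    refine pos_on_of_ne_zero hτ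
      (fun s hs => (hb s hs.1).continuousAt.continuousWithinAt)
      (by rw [hb0]; exact hb₀) (fun s hs hzero => ?_)
    have := hconstb s hs.1
    rw [hzero] at this
    nlinarith [sq_nonneg (β s)]
  have hupos : ∀ τ, 0 ≤ τ → 0 < a τ + β τ := by
    intro τ hτ
    refine pos_on_of_ne_zero (f := fun r => a r + β r) hτ
      (fun s hs => ((ha s hs.1).add (hβ s hs.1)).continuousAt.continuousWithinAt)
      (by show (0:ℝ) < a 0 + β 0; rw [ha0, hβ0, add_zero]; exact hε) (fun s hs hzero => ?_)
    have hzero' : a s + β s = 0 := hzero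
    have h2 : a s ^ 2 - β s ^ 2 = (a s + β s) * (a s - β s) := by ring
    rw [hzero', zero_mul] at h2
    rw [hconsta s hs.1] at h2
    linarith
  have hvpos : ∀ τ, 0 ≤ τ → 0 < a τ - β τ := by
    intro τ hτ
    refine pos_on_of_ne_zero (f := fun r => a r - β r) hτ
      (fun s hs => ((ha s hs.1).sub (hβ s hs.1)).continuousAt.continuousWithinAt)
      (by show (0:ℝ) < a 0 - β 0; rw [ha0, hβ0, sub_zero]; exact hε) (fun s hs hzero => ?_)
    have hzero' : a s - β s = 0 := hzero
    have h2 : a s ^ 2 - β s ^ 2 = (a s + β s) * (a s - β s) := by ring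
    rw [hzero', mul_zero] at h2
    rw [hconsta s hs.1] at h2
    linarith
  -- u, v derivative forms
  have hu' : ∀ s, 0 ≤ s → HasDerivAt (fun r => a r + β r)
      ((b s ^ D * (z - a s * b s ^ D * β s)) * (a s + β s)) s := by
    intro s hs
    have h := (ha s hs).fun_add (hβ s hs)
    refine h.congr_deriv ?_; symm; ring
  have hv' : ∀ s, 0 ≤ s → HasDerivAt (fun r => a r - β r)
      ((-(b s ^ D * (z - a s * b s ^ D * β s))) * (a s - β s)) s := by
    intro s hs
    have h := (ha s hs).fun_sub (hβ s hs)
    refine h.congr_deriv ?_; symm; ring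
  -- the Gronwall / comparison step
  have hGB : ∀ τ, 0 ≤ τ → (∀ s ∈ Set.Icc (0:ℝ) τ, β s ^ 2 ≤ b₀ ^ 2 / (D:ℝ)) →
      |β τ| < ε * Real.exp (max (c0 * τ - 1) 0) := by
    intro τ hτ Hb
    have hble : ∀ s ∈ Set.Icc (0:ℝ) τ, b s ≤ s2 * b₀ := by
      intro s hs
      have h1 := hconstb s hs.1
      have h2 := Hb s hs
      have h3 := hbpos s hs.1
      have hsq : b s ^ 2 ≤ (s2 * b₀) ^ 2 := by
        have h5 : β s ^ 2 * (D:ℝ) ≤ b₀ ^ 2 := (le_div_iff₀ hDpos).mp h2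
        have h6 : (s2 * b₀) ^ 2 = 2 * b₀ ^ 2 := by rw [mul_pow, hs2sq]
        linarith
      have := Real.sqrt_le_sqrt hsq
      rwa [Real.sqrt_sq h3.le, Real.sqrt_sq (by positivity)] at this
    have hpu : ∀ s ∈ Set.Icc (0:ℝ) τ, |b s ^ D * (z - a s * b s ^ D * β s)| ≤ κ := by
      intro s hs
      rw [abs_mul]
      have h2 : b s ^ D ≤ (s2 * b₀) ^ D := pow_le_pow_left₀ (hbpos s hs.1).le (hble s hs) D
      have h2' : |b s ^ D| ≤ s2 ^ D * b₀ ^ D := by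
        rw [abs_of_pos (pow_pos (hbpos s hs.1) D), ← mul_pow]; exact h2
      have h3 := hwabs s hs.1
      calc |b s ^ D| * |z - a s * b s ^ D * β s| ≤ (s2 ^ D * b₀ ^ D) * |z| :=
            mul_le_mul h2' h3 (abs_nonneg _) (by positivity)
        _ = κ := by rw [hκdef]
    have hpv : ∀ s ∈ Set.Icc (0:ℝ) τ, |(-(b s ^ D * (z - a s * b s ^ D * β s)))| ≤ κ := by
      intro s hs; rw [abs_neg]; exact hpu s hs
    have hU : a τ + β τ ≤ ε * Real.exp (κ * τ) := by
      have h := gron_upper hτ (fun s hs => hu' s hs.1) hpu (fun s hs => hupos s hs.1)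
      simpa [ha0, hβ0] using h
    have hUl : ε * Real.exp (-(κ * τ)) ≤ a τ + β τ := by
      have h := gron_lower hτ (fun s hs => hu' s hs.1) hpu (fun s hs => hupos s hs.1)
      simpa [ha0, hβ0] using h
    have hV : a τ - β τ ≤ ε * Real.exp (κ * τ) := by
      have h := gron_upper hτ (fun s hs => hv' s hs.1) hpv (fun s hs => hvpos s hs.1)
      simpa [ha0, hβ0] using h
    have hVl : ε * Real.exp (-(κ * τ)) ≤ a τ - β τ := by
      have h := gron_lower hτ (fun s hs => hv' s hs.1) hpv (fun s hs => hvpos s hs.1)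
      simpa [ha0, hβ0] using h
    have hβb : |β τ| ≤ ε * (Real.exp (κ * τ) - Real.exp (-(κ * τ))) / 2 := by
      rw [abs_le]
      constructor
      · linarith
      · linarith
    have hx0 : 0 ≤ c0 * τ := by positivity
    have hkτ : κ * τ = (c0 * τ) / s2 := by
      rw [hc0]
      field_simp
    have hkey := key_ineq hx0
    rw [← hs2def, ← hkτ] at hkey
    calc |β τ| ≤ ε * (Real.exp (κ * τ) - Real.exp (-(κ * τ))) / 2 := hβb
      _ < ε * Real.exp (max (c0 * τ - 1) 0) := by
          have hmul := mul_lt_mul_of_pos_left hkey hε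
          linarith
  -- the cap : ε * exp(max(c0 τ - 1) 0) ≤ b₀ / √D for τ ∈ [0, t]
  have hsD : 0 < Real.sqrt (D:ℝ) := Real.sqrt_pos.mpr hDpos
  have hLnn : (0:ℝ) ≤ Real.log (b₀ / (Real.sqrt (D:ℝ) * ε)) := by
    apply Real.log_nonneg
    rw [le_div_iff₀ (by positivity)]
    have h := (le_div_iff₀ hsD).mp hsmall
    nlinarith [h]
  have hct : c0 * t ≤ 1 + Real.log (b₀ / (Real.sqrt (D:ℝ) * ε)) := by
    have h := mul_le_mul_of_nonneg_left hT hc0pos.le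
    have hrr : c0 * ((1 + Real.log (b₀ / (Real.sqrt (D:ℝ) * ε))) * c0⁻¹)
        = 1 + Real.log (b₀ / (Real.sqrt (D:ℝ) * ε)) := by
      field_simp
    rw [hrr] at h
    exact h
  have hcap : ∀ τ ∈ Set.Icc (0:ℝ) t, ε * Real.exp (max (c0 * τ - 1) 0) ≤ b₀ / Real.sqrt (D:ℝ) := by
    intro τ hτ
    have h1 : max (c0 * τ - 1) 0 ≤ Real.log (b₀ / (Real.sqrt (D:ℝ) * ε)) := by
      apply max_le _ hLnn
      have : c0 * τ ≤ c0 * t := mul_le_mul_of_nonneg_left hτ.2 hc0pos.le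
      linarith
    have h2 : Real.exp (max (c0 * τ - 1) 0) ≤ b₀ / (Real.sqrt (D:ℝ) * ε) := by
      have := Real.exp_le_exp.mpr h1
      rwa [Real.exp_log (by positivity)] at this
    have h3 := mul_le_mul_of_nonneg_left h2 hε.le
    calc ε * Real.exp (max (c0 * τ - 1) 0) ≤ ε * (b₀ / (Real.sqrt (D:ℝ) * ε)) := h3
      _ = b₀ / Real.sqrt (D:ℝ) := by field_simp
  -- bootstrap
  have Hall : ∀ s ∈ Set.Icc (0:ℝ) t, β s ^ 2 ≤ b₀ ^ 2 / (D:ℝ) := by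
    by_contra hcon
    push_neg at hcon
    obtain ⟨s₁, hs₁, hbad⟩ := hcon
    set Kset := {s : ℝ | s ∈ Set.Icc (0:ℝ) t ∧ b₀ ^ 2 / (D:ℝ) ≤ β s ^ 2} with hKdef
    have hKne : Kset.Nonempty := ⟨s₁, hs₁, hbad.le⟩
    have hKbdd : BddBelow Kset := ⟨0, fun s hs => hs.1.1⟩
    set t₀ := sInf Kset with ht₀def
    have ht₀mem : t₀ ∈ Set.Icc (0:ℝ) t :=
      ⟨le_csInf hKne (fun s hs => hs.1.1), (csInf_le hKbdd ⟨hs₁, hbad.le⟩).trans hs₁.2⟩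
    have hclos : t₀ ∈ closure Kset := csInf_mem_closure hKne hKbdd
    have hcontβ2 : ContinuousAt (fun r => β r ^ 2) t₀ :=
      ((hβ t₀ ht₀mem.1).continuousAt).pow 2
    have hge : b₀ ^ 2 / (D:ℝ) ≤ β t₀ ^ 2 := by
      have h1 := hcontβ2.continuousWithinAt.mem_closure_image hclos
      have h2 : (fun r => β r ^ 2) '' Kset ⊆ Set.Ici (b₀ ^ 2 / (D:ℝ)) := by
        rintro _ ⟨s, hs, rfl⟩; exact hs.2
      exact (isClosed_Ici.closure_subset_iff.mpr h2) h1
    have ht₀pos : 0 < t₀ := by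
      rcases eq_or_lt_of_le ht₀mem.1 with h | h
      · exfalso
        rw [← h, hβ0] at hge
        nlinarith [div_pos (pow_pos hb₀ 2) hDpos]
      · exact h
    have hlt : ∀ s, 0 ≤ s → s < t₀ → β s ^ 2 < b₀ ^ 2 / (D:ℝ) := by
      intro s hs0 hst
      by_contra hh
      push_neg at hh
      have hmem : s ∈ Kset := ⟨⟨hs0, hst.le.trans ht₀mem.2⟩, hh⟩
      have := csInf_le hKbdd hmem
      rw [← ht₀def] at this
      linarith
    have hle' : β t₀ ^ 2 ≤ b₀ ^ 2 / (D:ℝ) := by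
      have htend : Filter.Tendsto (fun r => β r ^ 2) (nhdsWithin t₀ (Set.Iio t₀))
          (nhds (β t₀ ^ 2)) := hcontβ2.continuousWithinAt.tendsto
      apply le_of_tendsto htend
      filter_upwards [Ioo_mem_nhdsLT_of_mem (⟨ht₀pos, le_refl t₀⟩ : t₀ ∈ Set.Ioc 0 t₀)] with r hr
      exact (hlt r hr.1.le hr.2).le
    have hIcc : ∀ s ∈ Set.Icc (0:ℝ) t₀, β s ^ 2 ≤ b₀ ^ 2 / (D:ℝ) := by
      intro s hs
      rcases lt_or_eq_of_le hs.2 with h | h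
      · exact (hlt s hs.1 h).le
      · rw [h]; exact hle'
    have hstrict := hGB t₀ ht₀mem.1 hIcc
    have hq : |β t₀| < b₀ / Real.sqrt (D:ℝ) := lt_of_lt_of_le hstrict (hcap t₀ ht₀mem)
    have hq2 : β t₀ ^ 2 < b₀ ^ 2 / (D:ℝ) := by
      have h3 : (b₀ / Real.sqrt (D:ℝ)) ^ 2 = b₀ ^ 2 / (D:ℝ) := by
        rw [div_pow, Real.sq_sqrt hDpos.le]
      calc β t₀ ^ 2 = |β t₀| ^ 2 := (sq_abs _).symm
        _ < (b₀ / Real.sqrt (D:ℝ)) ^ 2 := by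
            apply pow_lt_pow_left₀ hq (abs_nonneg _)
            norm_num
        _ = b₀ ^ 2 / (D:ℝ) := h3
    linarith
  -- conclusion
  have hβfin := hGB t ht Hall
  have hmm : c0 * max (t - c0⁻¹) 0 = max (c0 * t - 1) 0 := by
    rw [mul_max_of_nonneg _ _ hc0pos.le, mul_zero, mul_sub, mul_inv_cancel₀ hc0pos.ne']
  constructor
  · rw [hmm]
    exact hβfin.le
  · -- θ bound
    have hm0 : (0:ℝ) ≤ max (c0 * t - 1) 0 := le_max_right _ _
    have hE1 : (1:ℝ) ≤ Real.exp (max (c0 * t - 1) 0) := Real.one_le_exp hm0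
    have hEpos : (0:ℝ) < Real.exp (max (c0 * t - 1) 0) := Real.exp_pos _
    set E := Real.exp (max (c0 * t - 1) 0) with hEdef
    have hβt : |β t| ≤ ε * E := hβfin.le
    have hbt : b t ≤ s2 * b₀ := by
      have h1 := hconstb t ht
      have h2 := Hall t ⟨ht, le_refl t⟩
      have h3 := hbpos t ht
      have hsq : b t ^ 2 ≤ (s2 * b₀) ^ 2 := by
        have h5 : β t ^ 2 * (D:ℝ) ≤ b₀ ^ 2 := (le_div_iff₀ hDpos).mp h2
        have h6 : (s2 * b₀) ^ 2 = 2 * b₀ ^ 2 := by rw [mul_pow, hs2sq]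
        linarith
      have := Real.sqrt_le_sqrt hsq
      rwa [Real.sqrt_sq h3.le, Real.sqrt_sq (by positivity)] at this
    have hbtD : |b t ^ D| ≤ s2 ^ D * b₀ ^ D := by
      rw [abs_of_pos (pow_pos (hbpos t ht) D), ← mul_pow]
      exact pow_le_pow_left₀ (hbpos t ht).le hbt D
    have hat : |a t| ≤ s2 * ε * E := by
      have h1 := hconsta t ht
      have hβ2 : β t ^ 2 ≤ (ε * E) ^ 2 := by
        rw [← sq_abs (β t)]
        exact pow_le_pow_left₀ (abs_nonneg _) hβt 2
      have hsq : a t ^ 2 ≤ (s2 * ε * E) ^ 2 := by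
        have hE2 : 1 ≤ E ^ 2 := by nlinarith
        have h4 : (s2 * ε * E) ^ 2 = 2 * ε ^ 2 * E ^ 2 := by
          rw [mul_pow, mul_pow, hs2sq]
        have h5 : (ε * E) ^ 2 = ε ^ 2 * E ^ 2 := by ring
        nlinarith [sq_nonneg ε]
      have := Real.sqrt_le_sqrt hsq
      rwa [Real.sqrt_sq_eq_abs, Real.sqrt_sq (by positivity)] at this
    have hθ : |a t * b t ^ D * β t| ≤ (s2 * ε * E) * (s2 ^ D * b₀ ^ D) * (ε * E) := by
      rw [abs_mul, abs_mul]
      apply mul_le_mul _ hβt (abs_nonneg _) (by positivity)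
      exact mul_le_mul hat hbtD (abs_nonneg _) (by positivity)
    have hexp2 : (2 : ℝ) ^ (((D : ℝ) + 3) / 2) * b₀ ^ D * |z| * max (t - c0⁻¹) 0
        = max (c0 * t - 1) 0 + max (c0 * t - 1) 0 := by
      have h1 : (2 : ℝ) ^ (((D : ℝ) + 3) / 2) = 2 * (2 : ℝ) ^ (((D : ℝ) + 1) / 2) := by
        have he : ((D : ℝ) + 3) / 2 = 1 + ((D : ℝ) + 1) / 2 := by ring
        rw [he, Real.rpow_add (by norm_num : (0:ℝ) < 2), Real.rpow_one]
      rw [h1]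
      have : 2 * (2 : ℝ) ^ (((D : ℝ) + 1) / 2) * b₀ ^ D * |z| * max (t - c0⁻¹) 0
          = 2 * (c0 * max (t - c0⁻¹) 0) := by rw [hc0def]; ring
      rw [this, hmm]
      ring
    calc |a t * b t ^ D * β t| ≤ (s2 * ε * E) * (s2 ^ D * b₀ ^ D) * (ε * E) := hθ
      _ = (s2 * s2 ^ D) * lam * b₀ ^ D * (E * E) := by rw [← hεsq]; ring
      _ = (2 : ℝ) ^ (((D : ℝ) + 1) / 2) * lam * b₀ ^ D *
          Real.exp ((2 : ℝ) ^ (((D : ℝ) + 3) / 2) * b₀ ^ D * |z| * max (t - c0⁻¹) 0) := by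
        rw [hpow1, hexp2, Real.exp_add, hEdef]
end

section
/- For the deep gradient flow with D ≥ 1 layers and z > 0, let T^sig = inf{ t ≥ 0 : θ(t) ≥ z/2 }. Then: (i) if λ^{1/2} ≤ b₀/√D, then T^sig ≤ 2 (b₀^D z)^{−1} [ 1 + ( ln( (D^{−D/2} z/2)^{1/(D+2)} / λ^{1/2} ) )⁺ ]; (ii) if λ^{1/2} ≥ b₀/√D, then T^sig ≤ 2 (√D λ^{1/2} b₀^{D−1} z)^{−1} (1 + R⁺), where R = ln( (D z/2)^{1/(D+2)} / b₀ ) if D = 1 and R = 1/(D−1) if D > 1; here x⁺ = max(x,0). In particular T^sig is finite in both cases. -/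
open Real Set

lemma aux_mono {f f' : ℝ → ℝ} {s e : ℝ} (hse : s ≤ e)
    (hf : ∀ t ∈ Icc s e, HasDerivAt f (f' t) t)
    (h0 : ∀ t ∈ Icc s e, 0 ≤ f' t) : f s ≤ f e := by
  have hc : ContinuousOn f (Icc s e) := fun t ht => ((hf t ht).continuousAt).continuousWithinAt
  have hm : MonotoneOn f (Icc s e) := by
    apply monotoneOn_of_deriv_nonneg (convex_Icc s e) hc
    · intro t ht
      rw [interior_Icc] at ht
      exact ((hf t (Ioo_subset_Icc_self ht)).differentiableAt).differentiableWithinAt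
    · intro t ht
      rw [interior_Icc] at ht
      rw [(hf t (Ioo_subset_Icc_self ht)).deriv]
      exact h0 t (Ioo_subset_Icc_self ht)
  exact hm (left_mem_Icc.2 hse) (right_mem_Icc.2 hse) hse

lemma aux_const {f f' : ℝ → ℝ} {s e : ℝ} (hse : s ≤ e)
    (hf : ∀ t ∈ Icc s e, HasDerivAt f (f' t) t)
    (h0 : ∀ t ∈ Icc s e, f' t = 0) : f e = f s := by
  have h1 : f s ≤ f e := aux_mono hse hf (fun t ht => (h0 t ht).ge)
  have h2 : f e ≤ f s := by
    have := aux_mono hse (f := fun t => -f t) (f' := fun t => -f' t)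
      (fun t ht => (hf t ht).neg)
      (fun t ht => by show (0:ℝ) ≤ -f' t; rw [h0 t ht]; simp)
    linarith
  linarith

lemma tri_mul_le {x y w X Y W : ℝ} (hx : 0 ≤ x) (hy : 0 ≤ y) (hw : 0 ≤ w)
    (hX : x ≤ X) (hY : y ≤ Y) (hW : w ≤ W) : x * y * w ≤ X * Y * W := by
  have h1 : x * y ≤ X * Y := mul_le_mul hX hY hy (hx.trans hX)
  exact mul_le_mul h1 hW hw (mul_nonneg (hx.trans hX) (hy.trans hY))

set_option maxHeartbeats 2000000 in
/-- upper bounds on the signal hitting time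
`T^sig = inf{ t ≥ 0 : θ(t) ≥ z/2 }` for the deep gradient flow with `D ≥ 1` and `z > 0`;
in particular the hitting set is nonempty (so `T^sig` is finite) in both cases. -/
theorem deep_flow_signal_time_bound
    (D : ℕ) (hD : 1 ≤ D) (lam b₀ z : ℝ) (hlam : 0 < lam) (hb₀ : 0 < b₀) (hz : 0 < z)
    (a b β : ℝ → ℝ)
    (ha0 : a 0 = Real.sqrt lam) (hb0 : b 0 = b₀) (hβ0 : β 0 = 0)
    (ha : ∀ t : ℝ, 0 ≤ t →
      HasDerivAt a ((b t) ^ D * β t * (z - a t * (b t) ^ D * β t)) t)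
    (hb : ∀ t : ℝ, 0 ≤ t →
      HasDerivAt b ((D : ℝ) * a t * (b t) ^ (D - 1) * β t * (z - a t * (b t) ^ D * β t)) t)
    (hβ : ∀ t : ℝ, 0 ≤ t →
      HasDerivAt β (a t * (b t) ^ D * (z - a t * (b t) ^ D * β t)) t) :
    (Real.sqrt lam ≤ b₀ / Real.sqrt (D : ℝ) →
      {t : ℝ | 0 ≤ t ∧ z / 2 ≤ a t * (b t) ^ D * β t}.Nonempty ∧
      sInf {t : ℝ | 0 ≤ t ∧ z / 2 ≤ a t * (b t) ^ D * β t} ≤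
        2 * (b₀ ^ D * z)⁻¹ *
          (1 + max (Real.log ((((D : ℝ) ^ (-(D : ℝ) / 2) * z / 2) ^ (1 / ((D : ℝ) + 2))) /
            Real.sqrt lam)) 0)) ∧
    (b₀ / Real.sqrt (D : ℝ) ≤ Real.sqrt lam →
      {t : ℝ | 0 ≤ t ∧ z / 2 ≤ a t * (b t) ^ D * β t}.Nonempty ∧
      sInf {t : ℝ | 0 ≤ t ∧ z / 2 ≤ a t * (b t) ^ D * β t} ≤
        2 * (Real.sqrt (D : ℝ) * Real.sqrt lam * b₀ ^ (D - 1) * z)⁻¹ *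
          (1 + max (if D = 1 then
              Real.log ((((D : ℝ) * z / 2) ^ (1 / ((D : ℝ) + 2))) / b₀)
            else 1 / ((D : ℝ) - 1)) 0)) := by
  obtain ⟨E, rfl⟩ : ∃ E, D = E + 1 := ⟨D - 1, (Nat.succ_pred_eq_of_pos hD).symm⟩
  simp only [Nat.add_sub_cancel] at hb ⊢
  have hDpos : (0:ℝ) < ((E:ℝ) + 1) := by positivity
  have hDcast : ((E + 1 : ℕ) : ℝ) = (E:ℝ) + 1 := by push_cast; ring
  have hsl : 0 < Real.sqrt lam := Real.sqrt_pos.2 hlam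
  have hsD : 0 < Real.sqrt ((E + 1 : ℕ) : ℝ) := Real.sqrt_pos.2 (by rw [hDcast]; positivity)
  -- conserved quantities
  have hconsa : ∀ t, 0 ≤ t → a t ^ 2 = lam + β t ^ 2 := by
    intro t ht
    have key := aux_const (f := fun s => a s ^ 2 - β s ^ 2) (f' := fun _ => (0:ℝ)) ht
      (fun s hs => by
        have h1 := ((ha s hs.1).pow 2).sub ((hβ s hs.1).pow 2)
        refine h1.congr_deriv ?_
        push_cast
        ring)
      (fun s _ => rfl)
    rw [ha0, hβ0, Real.sq_sqrt hlam.le] at key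
    nlinarith [key]
  have hconsb : ∀ t, 0 ≤ t → b t ^ 2 = b₀ ^ 2 + ((E:ℝ)+1) * β t ^ 2 := by
    intro t ht
    have key := aux_const (f := fun s => b s ^ 2 - ((E:ℝ)+1) * β s ^ 2) (f' := fun _ => (0:ℝ)) ht
      (fun s hs => by
        have h1 := ((hb s hs.1).pow 2).sub (((hβ s hs.1).pow 2).const_mul ((E:ℝ)+1))
        refine h1.congr_deriv ?_
        have hp : b s ^ (E + 1) = b s ^ E * b s := pow_succ _ _
        push_cast
        rw [hp]
        ring)
      (fun s _ => rfl)
    rw [hb0, hβ0] at key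
    nlinarith [key]
  -- positivity of a and b
  have hane : ∀ t, 0 ≤ t → a t ≠ 0 := by
    intro t ht h0
    have h := hconsa t ht
    rw [h0] at h
    nlinarith [sq_nonneg (β t)]
  have hbne : ∀ t, 0 ≤ t → b t ≠ 0 := by
    intro t ht h0
    have h := hconsb t ht
    rw [h0] at h
    nlinarith [sq_nonneg (β t), sq_nonneg b₀, mul_nonneg (le_of_lt hDpos) (sq_nonneg (β t))]
  have hapos : ∀ t, 0 ≤ t → 0 < a t := by
    intro t ht
    rcases lt_trichotomy (a t) 0 with h | h | h
    · exfalso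
      have hcont : ContinuousOn a (Icc 0 t) :=
        fun s hs => ((ha s hs.1).continuousAt).continuousWithinAt
      have h0mem : (0:ℝ) ∈ Icc (a t) (a 0) := by rw [ha0]; exact ⟨h.le, hsl.le⟩
      obtain ⟨c, hc, hc0⟩ := intermediate_value_Icc' ht hcont h0mem
      exact hane c hc.1 hc0
    · exact absurd h (hane t ht)
    · exact h
  have hbpos : ∀ t, 0 ≤ t → 0 < b t := by
    intro t ht
    rcases lt_trichotomy (b t) 0 with h | h | h
    · exfalso
      have hcont : ContinuousOn b (Icc 0 t) :=
        fun s hs => ((hb s hs.1).continuousAt).continuousWithinAt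
      have h0mem : (0:ℝ) ∈ Icc (b t) (b 0) := by rw [hb0]; exact ⟨h.le, hb₀.le⟩
      obtain ⟨c, hc, hc0⟩ := intermediate_value_Icc' ht hcont h0mem
      exact hbne c hc.1 hc0
    · exact absurd h (hbne t ht)
    · exact h
  -- pointwise lower bounds
  have halam : ∀ t, 0 ≤ t → Real.sqrt lam ≤ a t := by
    intro t ht
    have h := hconsa t ht
    have h2 : Real.sqrt lam ≤ Real.sqrt (a t ^ 2) :=
      Real.sqrt_le_sqrt (by nlinarith [sq_nonneg (β t)])
    rwa [Real.sqrt_sq (hapos t ht).le] at h2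
  have hbb0 : ∀ t, 0 ≤ t → b₀ ≤ b t := by
    intro t ht
    have h := hconsb t ht
    have h2 : Real.sqrt (b₀ ^ 2) ≤ Real.sqrt (b t ^ 2) :=
      Real.sqrt_le_sqrt (by nlinarith [mul_nonneg hDpos.le (sq_nonneg (β t))])
    rwa [Real.sqrt_sq hb₀.le, Real.sqrt_sq (hbpos t ht).le] at h2
  have haβ : ∀ t, 0 ≤ t → β t ≤ a t := by
    intro t ht
    rcases le_or_gt (β t) 0 with h | h
    · linarith [hapos t ht]
    · have hc := hconsa t ht
      have h2 : Real.sqrt (β t ^ 2) ≤ Real.sqrt (a t ^ 2) :=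
        Real.sqrt_le_sqrt (by nlinarith)
      rwa [Real.sqrt_sq h.le, Real.sqrt_sq (hapos t ht).le] at h2
  have hbβ : ∀ t, 0 ≤ t → 0 ≤ β t → Real.sqrt ((E + 1 : ℕ) : ℝ) * β t ≤ b t := by
    intro t ht hβt
    have hc := hconsb t ht
    have hsq : Real.sqrt ((E + 1 : ℕ) : ℝ) ^ 2 = ((E:ℝ) + 1) := by
      rw [Real.sq_sqrt (by rw [hDcast]; positivity), hDcast]
    have h2 : Real.sqrt ((Real.sqrt ((E + 1 : ℕ) : ℝ) * β t) ^ 2) ≤ Real.sqrt (b t ^ 2) := by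
      apply Real.sqrt_le_sqrt
      rw [mul_pow, hsq]
      nlinarith [sq_nonneg b₀]
    rwa [Real.sqrt_sq (mul_nonneg hsD.le hβt), Real.sqrt_sq (hbpos t ht).le] at h2
  -- key reduction
  have hbdd : BddBelow {t : ℝ | 0 ≤ t ∧ z / 2 ≤ a t * (b t) ^ (E+1) * β t} :=
    ⟨0, fun x hx => hx.1⟩
  have key : ∀ T : ℝ, 0 ≤ T → ((∀ t ∈ Icc 0 T, a t * (b t) ^ (E+1) * β t < z / 2) → False) →
      {t : ℝ | 0 ≤ t ∧ z / 2 ≤ a t * (b t) ^ (E+1) * β t}.Nonempty ∧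
      sInf {t : ℝ | 0 ≤ t ∧ z / 2 ≤ a t * (b t) ^ (E+1) * β t} ≤ T := by
    intro T hT h
    by_cases hex : ∃ t ∈ Icc 0 T, z / 2 ≤ a t * (b t) ^ (E+1) * β t
    · obtain ⟨t, ht, hθ2⟩ := hex
      have htS : t ∈ {t : ℝ | 0 ≤ t ∧ z / 2 ≤ a t * (b t) ^ (E+1) * β t} := ⟨ht.1, hθ2⟩
      exact ⟨⟨t, htS⟩, (csInf_le hbdd htS).trans ht.2⟩
    · push_neg at hex
      exact (h hex).elim
  -- monotonicity and linear lower bound under the smallness assumption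
  have hβlow : ∀ T, 0 ≤ T → (∀ t ∈ Icc 0 T, a t * (b t) ^ (E+1) * β t < z / 2) →
      (∀ s t, 0 ≤ s → s ≤ t → t ≤ T → β s ≤ β t) ∧
      (∀ t, 0 ≤ t → t ≤ T → z / 2 * Real.sqrt lam * b₀ ^ (E+1) * t ≤ β t) := by
    intro T hT hsm
    have hmono : ∀ s t, 0 ≤ s → s ≤ t → t ≤ T → β s ≤ β t := by
      intro s t hs hst htT
      apply aux_mono (f := β)
        (f' := fun u => a u * (b u) ^ (E+1) * (z - a u * (b u) ^ (E+1) * β u)) hst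
      · intro u hu
        exact hβ u (hs.trans hu.1)
      · intro u hu
        have hu0 : 0 ≤ u := hs.trans hu.1
        have huT : u ≤ T := hu.2.trans htT
        have hθu := hsm u ⟨hu0, huT⟩
        have := hapos u hu0
        have := hbpos u hu0
        have hbp : 0 < b u ^ (E+1) := pow_pos (hbpos u hu0) _
        have hzθ : 0 < z - a u * (b u) ^ (E+1) * β u := by linarith
        positivity
    refine ⟨hmono, ?_⟩
    have hβnn : ∀ t, 0 ≤ t → t ≤ T → 0 ≤ β t := by
      intro t ht htT
      have := hmono 0 t le_rfl ht htT
      rwa [hβ0] at this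
    intro t ht htT
    have hm := aux_mono (f := fun u => β u - z / 2 * Real.sqrt lam * b₀ ^ (E+1) * u)
      (f' := fun u => a u * (b u) ^ (E+1) * (z - a u * (b u) ^ (E+1) * β u)
        - z / 2 * Real.sqrt lam * b₀ ^ (E+1)) ht
      (fun u hu => by
        have := (hβ u hu.1).sub (((hasDerivAt_id u).const_mul
          (z / 2 * Real.sqrt lam * b₀ ^ (E+1))))
        exact this.congr_deriv (by ring))
      (fun u hu => by
        have hu0 : 0 ≤ u := hu.1
        have huT : u ≤ T := hu.2.trans htT
        have hθu := hsm u ⟨hu0, huT⟩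
        have h1 : Real.sqrt lam * b₀ ^ (E+1) * (z / 2) ≤
            a u * (b u) ^ (E+1) * (z - a u * (b u) ^ (E+1) * β u) := by
          apply tri_mul_le hsl.le (by positivity) (by positivity)
            (halam u hu0) (pow_le_pow_left₀ hb₀.le (hbb0 u hu0) _) (by linarith)
        linarith)
    simp only [hβ0] at hm
    linarith [hm]
  -- exponential comparison helper
  have hexp : ∀ (c t₁ T : ℝ), 0 ≤ t₁ → t₁ ≤ T →
      (∀ t ∈ Icc t₁ T, c * β t ≤
        a t * (b t) ^ (E+1) * (z - a t * (b t) ^ (E+1) * β t)) →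
      β t₁ * Real.exp (c * (T - t₁)) ≤ β T := by
    intro c t₁ T ht₁ hT hcmp
    have hmono := aux_mono (f := fun t => β t * Real.exp (-(c * t)))
      (f' := fun t => (a t * (b t) ^ (E+1) * (z - a t * (b t) ^ (E+1) * β t) - c * β t)
        * Real.exp (-(c * t))) hT
      (fun t ht => by
        have ht0 : 0 ≤ t := ht₁.trans ht.1
        have hd2 : HasDerivAt (fun s => Real.exp (-(c * s))) (Real.exp (-(c * t)) * -c) t := by
          have := (((hasDerivAt_id t).const_mul c).neg).exp
          simpa using this
        have := (hβ t ht0).mul hd2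
        refine this.congr_deriv ?_
        ring)
      (fun t ht => mul_nonneg (by linarith [hcmp t ht]) (Real.exp_pos _).le)
    have h2 := mul_le_mul_of_nonneg_right hmono (Real.exp_pos (c * T)).le
    rw [mul_assoc, mul_assoc, ← Real.exp_add, ← Real.exp_add] at h2
    have e1 : -(c * t₁) + c * T = c * (T - t₁) := by ring
    have e2 : -(c * T) + c * T = 0 := by ring
    rw [e1, e2, Real.exp_zero, mul_one] at h2
    exact h2
  constructor
  · -- CASE (i)
    intro _hcase
    set B : ℝ := (((E + 1 : ℕ) : ℝ) ^ (-((E + 1 : ℕ) : ℝ) / 2) * z / 2) ^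
      (1 / (((E + 1 : ℕ) : ℝ) + 2)) with hB
    have hBpos : 0 < B := by
      rw [hB]
      apply Real.rpow_pos_of_pos
      have := Real.rpow_pos_of_pos (show (0:ℝ) < ((E + 1 : ℕ) : ℝ) by rw [hDcast]; positivity)
        (-((E + 1 : ℕ) : ℝ) / 2)
      positivity
    set L : ℝ := max (Real.log (B / Real.sqrt lam)) 0 with hL
    have hLnn : 0 ≤ L := le_max_right _ _
    set t₁ : ℝ := 2 * (b₀ ^ (E+1) * z)⁻¹ with ht₁
    have hbpow : 0 < b₀ ^ (E+1) := pow_pos hb₀ _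
    have ht₁pos : 0 < t₁ := by rw [ht₁]; positivity
    set T : ℝ := 2 * (b₀ ^ (E+1) * z)⁻¹ * (1 + L) with hT
    have hTt₁ : T = t₁ * (1 + L) := by rw [hT, ht₁]
    have ht₁T : t₁ ≤ T := by rw [hTt₁]; nlinarith
    have hT0 : 0 ≤ T := ht₁pos.le.trans ht₁T
    apply key T hT0
    intro hsm
    obtain ⟨hmono, hlin⟩ := hβlow T hT0 hsm
    have hβnn : ∀ t, 0 ≤ t → t ≤ T → 0 ≤ β t := by
      intro t ht htT
      have := hmono 0 t le_rfl ht htT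
      rwa [hβ0] at this
    have hβt₁ : Real.sqrt lam ≤ β t₁ := by
      have h1 := hlin t₁ ht₁pos.le ht₁T
      have h2 : z / 2 * Real.sqrt lam * b₀ ^ (E+1) * t₁ = Real.sqrt lam := by
        rw [ht₁]
        field_simp
      linarith [h2 ▸ h1]
    have hcmp : ∀ t ∈ Icc t₁ T, (z / 2 * b₀ ^ (E+1)) * β t ≤
        a t * (b t) ^ (E+1) * (z - a t * (b t) ^ (E+1) * β t) := by
      intro t ht
      have ht0 : 0 ≤ t := ht₁pos.le.trans ht.1
      have hβt : 0 ≤ β t := hβnn t ht0 ht.2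
      have hθt := hsm t ⟨ht0, ht.2⟩
      calc (z / 2 * b₀ ^ (E+1)) * β t = β t * b₀ ^ (E+1) * (z / 2) := by ring
        _ ≤ a t * (b t) ^ (E+1) * (z - a t * (b t) ^ (E+1) * β t) :=
          tri_mul_le hβt (by positivity) (by positivity) (haβ t ht0)
            (pow_le_pow_left₀ hb₀.le (hbb0 t ht0) _) (by linarith)
    have hexpT := hexp (z / 2 * b₀ ^ (E+1)) t₁ T ht₁pos.le ht₁T hcmp
    have harg : (z / 2 * b₀ ^ (E+1)) * (T - t₁) = L := by
      have hTd : T - t₁ = t₁ * L := by rw [hTt₁]; ring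
      rw [hTd, ht₁]
      field_simp
    have hexpL : B / Real.sqrt lam ≤ Real.exp L := by
      have hpos : 0 < B / Real.sqrt lam := by positivity
      rw [← Real.exp_log hpos]
      exact Real.exp_le_exp.2 (le_max_left _ _)
    have hβT : B ≤ β T := by
      have h1 : B = Real.sqrt lam * (B / Real.sqrt lam) := by field_simp
      calc B = Real.sqrt lam * (B / Real.sqrt lam) := h1
        _ ≤ Real.sqrt lam * Real.exp L := mul_le_mul_of_nonneg_left hexpL hsl.le
        _ ≤ β t₁ * Real.exp L := mul_le_mul_of_nonneg_right hβt₁ (Real.exp_pos _).le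
        _ = β t₁ * Real.exp ((z / 2 * b₀ ^ (E+1)) * (T - t₁)) := by rw [harg]
        _ ≤ β T := hexpT
    -- final contradiction
    have hβTnn : 0 ≤ β T := hBpos.le.trans hβT
    have hsD' := hsD
    have h1 : (Real.sqrt ((E + 1 : ℕ) : ℝ) * β T) ^ (E+1) ≤ b T ^ (E+1) :=
      pow_le_pow_left₀ (by positivity) (hbβ T hT0 hβTnn) _
    have h2 : β T * (Real.sqrt ((E + 1 : ℕ) : ℝ) * β T) ^ (E+1) * β T ≤
        a T * (b T) ^ (E+1) * β T :=
      tri_mul_le hβTnn (by positivity) hβTnn (haβ T hT0) h1 le_rfl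
    have h3 : Real.sqrt ((E + 1 : ℕ) : ℝ) ^ (E+1) * B ^ (E+1+2) ≤
        β T * (Real.sqrt ((E + 1 : ℕ) : ℝ) * β T) ^ (E+1) * β T := by
      have hp : B ^ (E+1+2) ≤ β T ^ (E+1+2) := pow_le_pow_left₀ hBpos.le hβT _
      calc Real.sqrt ((E + 1 : ℕ) : ℝ) ^ (E+1) * B ^ (E+1+2)
          ≤ Real.sqrt ((E + 1 : ℕ) : ℝ) ^ (E+1) * β T ^ (E+1+2) := by
            exact mul_le_mul_of_nonneg_left hp (by positivity)
        _ = β T * (Real.sqrt ((E + 1 : ℕ) : ℝ) * β T) ^ (E+1) * β T := by ring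
    have hval : Real.sqrt ((E + 1 : ℕ) : ℝ) ^ (E+1) * B ^ (E+1+2) = z / 2 := by
      have hXpos : (0:ℝ) < ((E + 1 : ℕ) : ℝ) ^ (-((E + 1 : ℕ) : ℝ) / 2) * z / 2 := by
        have := Real.rpow_pos_of_pos (show (0:ℝ) < ((E + 1 : ℕ) : ℝ) by rw [hDcast]; positivity)
          (-((E + 1 : ℕ) : ℝ) / 2)
        positivity
      have hDpos' : (0:ℝ) < ((E + 1 : ℕ) : ℝ) := by rw [hDcast]; positivity
      have e1 : B ^ (E+1+2) = ((E + 1 : ℕ) : ℝ) ^ (-((E + 1 : ℕ) : ℝ) / 2) * z / 2 := by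
        rw [hB, ← Real.rpow_natCast
          ((((E + 1 : ℕ) : ℝ) ^ (-((E + 1 : ℕ) : ℝ) / 2) * z / 2) ^
            (1 / (((E + 1 : ℕ) : ℝ) + 2))) (E+1+2),
          ← Real.rpow_mul hXpos.le]
        have he : 1 / (((E + 1 : ℕ) : ℝ) + 2) * ((E + 1 + 2 : ℕ) : ℝ) = 1 := by
          push_cast
          field_simp
        rw [he, Real.rpow_one]
      have e2 : Real.sqrt ((E + 1 : ℕ) : ℝ) ^ (E+1) =
          ((E + 1 : ℕ) : ℝ) ^ (((E + 1 : ℕ) : ℝ) / 2) := by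
        rw [Real.sqrt_eq_rpow, ← Real.rpow_natCast (((E + 1 : ℕ) : ℝ) ^ ((1:ℝ)/2)) (E+1),
          ← Real.rpow_mul hDpos'.le]
        congr 1
        ring
      have e3 : ((E + 1 : ℕ) : ℝ) ^ (((E + 1 : ℕ) : ℝ) / 2) *
          ((E + 1 : ℕ) : ℝ) ^ (-((E + 1 : ℕ) : ℝ) / 2) = 1 := by
        rw [← Real.rpow_add hDpos']
        have : ((E + 1 : ℕ) : ℝ) / 2 + -((E + 1 : ℕ) : ℝ) / 2 = 0 := by ring
        rw [this, Real.rpow_zero]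
      calc Real.sqrt ((E + 1 : ℕ) : ℝ) ^ (E+1) * B ^ (E+1+2)
          = (((E + 1 : ℕ) : ℝ) ^ (((E + 1 : ℕ) : ℝ) / 2) *
            ((E + 1 : ℕ) : ℝ) ^ (-((E + 1 : ℕ) : ℝ) / 2)) * z / 2 := by
            rw [e1, e2]; ring
        _ = z / 2 := by rw [e3]; ring
    have hθT := hsm T ⟨hT0, le_rfl⟩
    have h9 := h3.trans h2
    rw [hval] at h9
    linarith
  · -- CASE (ii)
    intro _hcase
    rcases Nat.eq_zero_or_pos E with hE | hE
    · -- D = 1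
      subst hE
      rw [if_pos rfl]
      have hs1 : ((0 + 1 : ℕ) : ℝ) = 1 := by norm_num
      have hsq1 : Real.sqrt ((0 + 1 : ℕ) : ℝ) = 1 := by rw [hs1, Real.sqrt_one]
      set B : ℝ := (((0 + 1 : ℕ) : ℝ) * z / 2) ^ (1 / (((0 + 1 : ℕ) : ℝ) + 2)) with hB
      have hXpos : (0:ℝ) < ((0 + 1 : ℕ) : ℝ) * z / 2 := by rw [hs1]; linarith
      have hBpos : 0 < B := Real.rpow_pos_of_pos hXpos _
      set L : ℝ := max (Real.log (B / b₀)) 0 with hL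
      have hLnn : 0 ≤ L := le_max_right _ _
      set t₁ : ℝ := 2 * (Real.sqrt ((0 + 1 : ℕ) : ℝ) * Real.sqrt lam * b₀ ^ 0 * z)⁻¹ with ht₁d
      have ht₁pos : 0 < t₁ := by rw [ht₁d, hsq1]; positivity
      set T : ℝ := 2 * (Real.sqrt ((0 + 1 : ℕ) : ℝ) * Real.sqrt lam * b₀ ^ 0 * z)⁻¹ * (1 + L)
        with hTd
      have hTt₁ : T = t₁ * (1 + L) := by rw [hTd, ht₁d]
      have ht₁T : t₁ ≤ T := by rw [hTt₁]; nlinarith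
      have hT0 : 0 ≤ T := ht₁pos.le.trans ht₁T
      apply key T hT0
      intro hsm
      obtain ⟨hmono, hlin⟩ := hβlow T hT0 hsm
      have hβnn : ∀ t, 0 ≤ t → t ≤ T → 0 ≤ β t := by
        intro t ht htT
        have := hmono 0 t le_rfl ht htT
        rwa [hβ0] at this
      have hβt₁ : b₀ ≤ β t₁ := by
        have h1 := hlin t₁ ht₁pos.le ht₁T
        have h2 : z / 2 * Real.sqrt lam * b₀ ^ (0+1) * t₁ = b₀ := by
          rw [ht₁d, hsq1]
          have h03 : b₀ ≠ 0 := hb₀.ne'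
          have h04 : z ≠ 0 := hz.ne'
          have h02 : Real.sqrt lam ≠ 0 := hsl.ne'
          field_simp
          ring
        rw [h2] at h1
        exact h1
      have hβb : ∀ t, 0 ≤ t → 0 ≤ β t → β t ≤ b t := by
        intro t ht hβt
        have := hbβ t ht hβt
        rwa [hsq1, one_mul] at this
      have hcmp : ∀ t ∈ Icc t₁ T, (z / 2 * Real.sqrt lam) * β t ≤
          a t * b t ^ (0+1) * (z - a t * b t ^ (0+1) * β t) := by
        intro t ht
        have ht0 : 0 ≤ t := ht₁pos.le.trans ht.1
        have hβt : 0 ≤ β t := hβnn t ht0 ht.2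
        have hθt := hsm t ⟨ht0, ht.2⟩
        have hbt : β t ≤ b t ^ (0+1) := by
          rw [zero_add, pow_one]
          exact hβb t ht0 hβt
        calc (z / 2 * Real.sqrt lam) * β t = Real.sqrt lam * β t * (z / 2) := by ring
          _ ≤ a t * b t ^ (0+1) * (z - a t * b t ^ (0+1) * β t) :=
            tri_mul_le hsl.le hβt (by positivity) (halam t ht0) hbt (by linarith)
      have hexpT := hexp (z / 2 * Real.sqrt lam) t₁ T ht₁pos.le ht₁T hcmp
      have harg : (z / 2 * Real.sqrt lam) * (T - t₁) = L := by
        have hTdiff : T - t₁ = t₁ * L := by rw [hTt₁]; ring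
        rw [hTdiff, ht₁d, hsq1]
        have h04 : z ≠ 0 := hz.ne'
        have h02 : Real.sqrt lam ≠ 0 := hsl.ne'
        field_simp
      have hexpL : B / b₀ ≤ Real.exp L := by
        have hpos : 0 < B / b₀ := by positivity
        rw [← Real.exp_log hpos]
        exact Real.exp_le_exp.2 (le_max_left _ _)
      have hβT : B ≤ β T := by
        have hBb : B = b₀ * (B / b₀) := by field_simp
        calc B = b₀ * (B / b₀) := hBb
          _ ≤ b₀ * Real.exp L := mul_le_mul_of_nonneg_left hexpL hb₀.le
          _ ≤ β t₁ * Real.exp L := mul_le_mul_of_nonneg_right hβt₁ (Real.exp_pos _).le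
          _ = β t₁ * Real.exp ((z / 2 * Real.sqrt lam) * (T - t₁)) := by rw [harg]
          _ ≤ β T := hexpT
      have hβTnn : 0 ≤ β T := hBpos.le.trans hβT
      have h1 : β T ^ (0+1) ≤ b T ^ (0+1) :=
        pow_le_pow_left₀ hβTnn (hβb T hT0 hβTnn) _
      have h2 : β T * β T ^ (0+1) * β T ≤ a T * b T ^ (0+1) * β T :=
        tri_mul_le hβTnn (by positivity) hβTnn (haβ T hT0) h1 le_rfl
      have h3 : B ^ (0+1+2) ≤ β T * β T ^ (0+1) * β T := by
        have hp : B ^ (0+1+2) ≤ β T ^ (0+1+2) := pow_le_pow_left₀ hBpos.le hβT _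
        calc B ^ (0+1+2) ≤ β T ^ (0+1+2) := hp
          _ = β T * β T ^ (0+1) * β T := by ring
      have hval : B ^ (0+1+2) = z / 2 := by
        rw [hB, ← Real.rpow_natCast ((((0 + 1 : ℕ) : ℝ) * z / 2) ^
          (1 / (((0 + 1 : ℕ) : ℝ) + 2))) (0+1+2), ← Real.rpow_mul hXpos.le]
        rw [hs1]
        norm_num
      have hθT := hsm T ⟨hT0, le_rfl⟩
      have h9 := h3.trans h2
      rw [hval] at h9
      linarith
    · -- D ≥ 2
      have hEne : E + 1 ≠ 1 := by omega
      rw [if_neg hEne]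
      have hE1 : (1:ℝ) ≤ (E:ℝ) := by exact_mod_cast hE
      have hEpos : (0:ℝ) < (E:ℝ) := by linarith
      have hDm : ((E + 1 : ℕ) : ℝ) - 1 = (E:ℝ) := by push_cast; ring
      have hmx : max (1 / (((E + 1 : ℕ) : ℝ) - 1)) 0 = 1 / (E:ℝ) := by
        rw [hDm]; exact max_eq_left (by positivity)
      set sD : ℝ := Real.sqrt ((E + 1 : ℕ) : ℝ) with hsDdef
      have hsDpos : 0 < sD := hsD
      have h01 : sD ≠ 0 := hsDpos.ne'
      have h02 : Real.sqrt lam ≠ 0 := hsl.ne'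
      have h03 : b₀ ≠ 0 := hb₀.ne'
      have h04 : z ≠ 0 := hz.ne'
      have h05 : (E:ℝ) ≠ 0 := hEpos.ne'
      set t₁ : ℝ := 2 * (sD * Real.sqrt lam * b₀ ^ E * z)⁻¹ with ht₁d
      have ht₁pos : 0 < t₁ := by rw [ht₁d]; positivity
      set T : ℝ := 2 * (sD * Real.sqrt lam * b₀ ^ E * z)⁻¹ *
        (1 + max (1 / (((E + 1 : ℕ) : ℝ) - 1)) 0) with hTd
      have hTt₁ : T = t₁ * (1 + 1 / (E:ℝ)) := by rw [hTd, ht₁d, hmx]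
      have ht₁T : t₁ ≤ T := by
        rw [hTt₁]
        nlinarith [one_div_pos.2 hEpos, ht₁pos]
      have hT0 : 0 ≤ T := ht₁pos.le.trans ht₁T
      apply key T hT0
      intro hsm
      obtain ⟨hmono, hlin⟩ := hβlow T hT0 hsm
      have hβnn : ∀ t, 0 ≤ t → t ≤ T → 0 ≤ β t := by
        intro t ht htT
        have := hmono 0 t le_rfl ht htT
        rwa [hβ0] at this
      have hy₀pos : 0 < b₀ / sD := by positivity
      have hβt₁ : b₀ / sD ≤ β t₁ := by
        have h1 := hlin t₁ ht₁pos.le ht₁T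
        have h2 : z / 2 * Real.sqrt lam * b₀ ^ (E+1) * t₁ = b₀ / sD := by
          rw [ht₁d, pow_succ]
          field_simp
        rw [h2] at h1
        exact h1
      have hβt : ∀ t ∈ Icc t₁ T, b₀ / sD ≤ β t := fun t ht =>
        hβt₁.trans (hmono t₁ t ht₁pos.le ht.1 ht.2)
      set c₃ : ℝ := z / 2 * Real.sqrt lam * sD ^ (E+1) with hc₃d
      have hc₃pos : 0 < c₃ := by rw [hc₃d]; positivity
      have hcmp : ∀ t ∈ Icc t₁ T, c₃ * β t ^ (E+1) ≤
          a t * b t ^ (E+1) * (z - a t * b t ^ (E+1) * β t) := by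
        intro t ht
        have ht0 : 0 ≤ t := ht₁pos.le.trans ht.1
        have hβtn : 0 ≤ β t := hβnn t ht0 ht.2
        have hθt := hsm t ⟨ht0, ht.2⟩
        have hbt : (sD * β t) ^ (E+1) ≤ b t ^ (E+1) :=
          pow_le_pow_left₀ (by positivity) (hbβ t ht0 hβtn) _
        calc c₃ * β t ^ (E+1) = Real.sqrt lam * (sD * β t) ^ (E+1) * (z / 2) := by
              rw [hc₃d]; ring
          _ ≤ a t * b t ^ (E+1) * (z - a t * b t ^ (E+1) * β t) :=
            tri_mul_le hsl.le (by positivity) (by positivity) (halam t ht0) hbt (by linarith)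
      have hzmono := aux_mono
        (f := fun t => -(β t ^ (-(E:ℤ))) - (E:ℝ) * c₃ * t)
        (f' := fun t => -(((-(E:ℤ)) : ℝ) * β t ^ (-(E:ℤ) - 1) *
          (a t * b t ^ (E+1) * (z - a t * b t ^ (E+1) * β t))) - (E:ℝ) * c₃) ht₁T
        (fun t ht => by
          have ht0 : 0 ≤ t := ht₁pos.le.trans ht.1
          have hβp : 0 < β t := hy₀pos.trans_le (hβt t ht)
          have hd1 := (hasDerivAt_zpow (-(E:ℤ)) (β t) (Or.inl hβp.ne')).comp t (hβ t ht0)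
          simp only [Function.comp_def] at hd1
          push_cast at hd1
          have hd2 := (hd1.neg).sub ((hasDerivAt_id t).const_mul ((E:ℝ) * c₃))
          refine hd2.congr_deriv ?_
          push_cast
          ring)
        (fun t ht => by
          have ht0 : 0 ≤ t := ht₁pos.le.trans ht.1
          have hβp : 0 < β t := hy₀pos.trans_le (hβt t ht)
          have hzp : 0 < β t ^ (-(E:ℤ) - 1) := zpow_pos hβp _
          have h5 := mul_le_mul_of_nonneg_left (hcmp t ht) hzp.le
          have hcomb : β t ^ (-(E:ℤ) - 1) * β t ^ ((E:ℤ) + 1) = 1 := by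
            rw [← zpow_add₀ hβp.ne']
            norm_num
          have hnat : (β t : ℝ) ^ (E + 1) = β t ^ ((E:ℤ) + 1) := by
            rw [← zpow_natCast (β t) (E+1)]
            push_cast
            ring
          have h6 : β t ^ (-(E:ℤ) - 1) * (c₃ * β t ^ (E+1)) = c₃ := by
            rw [hnat, show β t ^ (-(E:ℤ) - 1) * (c₃ * β t ^ ((E:ℤ) + 1)) =
              c₃ * (β t ^ (-(E:ℤ) - 1) * β t ^ ((E:ℤ) + 1)) from by ring, hcomb, mul_one]
          have h7 : c₃ ≤ β t ^ (-(E:ℤ) - 1) *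
              (a t * b t ^ (E+1) * (z - a t * b t ^ (E+1) * β t)) := by
            calc c₃ = β t ^ (-(E:ℤ) - 1) * (c₃ * β t ^ (E+1)) := h6.symm
              _ ≤ _ := h5
          have h8 := mul_le_mul_of_nonneg_left h7 hEpos.le
          push_cast
          nlinarith [h8])
      have hβTpos : 0 < β T := hy₀pos.trans_le (hβt T ⟨ht₁T, le_rfl⟩)
      have hzT : 0 < β T ^ (-(E:ℤ)) := zpow_pos hβTpos _
      have hβt₁pos : 0 < β t₁ := hy₀pos.trans_le hβt₁
      have hanti : β t₁ ^ (-(E:ℤ)) ≤ ((b₀ / sD) ^ E)⁻¹ := by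
        rw [zpow_neg, zpow_natCast]
        exact inv_anti₀ (pow_pos hy₀pos E) (pow_le_pow_left₀ hy₀pos.le hβt₁ E)
      have hEc : (E:ℝ) * c₃ * (T - t₁) = ((b₀ / sD) ^ E)⁻¹ := by
        have hTdiff : T - t₁ = t₁ * (1 / (E:ℝ)) := by rw [hTt₁]; ring
        rw [hTdiff, ht₁d, hc₃d, div_pow, pow_succ]
        field_simp
      linarith [hzmono, hanti, hEc, hzT]
end

section
/- For the deep gradient flow with D ≥ 1 layers and z > 0, with T^sig = inf{ t ≥ 0 : θ(t) ≥ z/2 } assumed finite, for every t ≥ T^sig one has 0 ≤ z − θ(t) ≤ (z/2) · exp( −(1/4) D^{D/(D+2)} z^{(2D+2)/(D+2)} (t − T^sig) ). -/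
open Real

lemma dfc_key (D : ℕ) (hD : 1 ≤ D) (z A B C : ℝ) (hz : 0 < z)
    (hθ : z / 2 ≤ A * B ^ D * C) :
    1 / 4 * (D : ℝ) ^ ((D : ℝ) / ((D : ℝ) + 2)) * z ^ ((2 * (D : ℝ) + 2) / ((D : ℝ) + 2))
      ≤ (B ^ D * C) ^ 2 + ((D : ℝ) * A * B ^ (D - 1) * C) ^ 2 + (A * B ^ D) ^ 2 := by
  have hd1 : (1:ℝ) ≤ (D:ℝ) := by exact_mod_cast hD
  have hd0 : (0:ℝ) < (D:ℝ) := by linarith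
  have hd2 : (0:ℝ) < (D:ℝ) + 2 := by linarith
  have hθ0 : 0 < A * B ^ D * C := lt_of_lt_of_le (by linarith) hθ
  have hA : A ≠ 0 := by intro h; rw [h] at hθ0; simp at hθ0
  have hB : B ≠ 0 := by
    intro h; rw [h, zero_pow (by omega : D ≠ 0)] at hθ0; simp at hθ0
  have hC : C ≠ 0 := by intro h; rw [h] at hθ0; simp at hθ0
  have hP₁0 : 0 < (A * B ^ D) ^ 2 :=
    lt_of_le_of_ne (sq_nonneg _) (Ne.symm (pow_ne_zero _ (mul_ne_zero hA (pow_ne_zero _ hB))))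
  have hP₂0 : 0 < (B ^ D * C) ^ 2 :=
    lt_of_le_of_ne (sq_nonneg _) (Ne.symm (pow_ne_zero _ (mul_ne_zero (pow_ne_zero _ hB) hC)))
  have hP₃0 : 0 < ((D : ℝ) * A * B ^ (D - 1) * C) ^ 2 :=
    lt_of_le_of_ne (sq_nonneg _) (Ne.symm (pow_ne_zero _
      (mul_ne_zero (mul_ne_zero (mul_ne_zero hd0.ne' hA) (pow_ne_zero _ hB)) hC)))
  have hw₁0 : (0:ℝ) ≤ 1 / ((D:ℝ) + 2) := by positivity
  have hw₃0 : (0:ℝ) ≤ (D:ℝ) / ((D:ℝ) + 2) := by positivity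
  have hp0 : (0:ℝ) ≤ (2 * (D:ℝ) + 2) / ((D:ℝ) + 2) := by positivity
  have hsum : 1 / ((D:ℝ) + 2) + 1 / ((D:ℝ) + 2) + (D:ℝ) / ((D:ℝ) + 2) = 1 := by
    field_simp; ring
  have amgm := Real.geom_mean_le_arith_mean3_weighted hw₁0 hw₁0 hw₃0
    hP₁0.le hP₂0.le hP₃0.le hsum
  -- the geometric mean equals D^(2*w₃) * θ^p
  have key : ((A * B ^ D) ^ 2) ^ (1 / ((D:ℝ) + 2)) * ((B ^ D * C) ^ 2) ^ (1 / ((D:ℝ) + 2)) *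
      (((D : ℝ) * A * B ^ (D - 1) * C) ^ 2) ^ ((D:ℝ) / ((D:ℝ) + 2))
      = (D:ℝ) ^ (2 * ((D:ℝ) / ((D:ℝ) + 2))) * (A * B ^ D * C) ^ ((2 * (D:ℝ) + 2) / ((D:ℝ) + 2)) := by
    rw [Real.rpow_def_of_pos hP₁0, Real.rpow_def_of_pos hP₂0, Real.rpow_def_of_pos hP₃0,
        Real.rpow_def_of_pos hd0, Real.rpow_def_of_pos hθ0, ← Real.exp_add, ← Real.exp_add,
        ← Real.exp_add]
    congr 1
    have l1 : Real.log ((A * B ^ D) ^ 2) = 2 * Real.log A + 2 * ((D:ℝ) * Real.log B) := by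
      rw [Real.log_pow, Real.log_mul hA (pow_ne_zero _ hB), Real.log_pow]; push_cast; ring
    have l2 : Real.log ((B ^ D * C) ^ 2) = 2 * ((D:ℝ) * Real.log B) + 2 * Real.log C := by
      rw [Real.log_pow, Real.log_mul (pow_ne_zero _ hB) hC, Real.log_pow]; push_cast; ring
    have l3 : Real.log (((D : ℝ) * A * B ^ (D - 1) * C) ^ 2)
        = 2 * Real.log (D:ℝ) + 2 * Real.log A + 2 * (((D:ℝ) - 1) * Real.log B) + 2 * Real.log C := by
      rw [Real.log_pow, Real.log_mul (mul_ne_zero (mul_ne_zero hd0.ne' hA) (pow_ne_zero _ hB)) hC,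
        Real.log_mul (mul_ne_zero hd0.ne' hA) (pow_ne_zero _ hB), Real.log_mul hd0.ne' hA,
        Real.log_pow, Nat.cast_sub hD]
      push_cast; ring
    have lθ : Real.log (A * B ^ D * C) = Real.log A + (D:ℝ) * Real.log B + Real.log C := by
      rw [Real.log_mul (mul_ne_zero hA (pow_ne_zero _ hB)) hC, Real.log_mul hA (pow_ne_zero _ hB),
        Real.log_pow]
    rw [l1, l2, l3, lθ]
    field_simp
    ring
  -- upper bound the arithmetic mean by the plain sum
  have hub : 1 / ((D:ℝ) + 2) * (A * B ^ D) ^ 2 + 1 / ((D:ℝ) + 2) * (B ^ D * C) ^ 2 +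
      (D:ℝ) / ((D:ℝ) + 2) * ((D : ℝ) * A * B ^ (D - 1) * C) ^ 2
      ≤ (B ^ D * C) ^ 2 + ((D : ℝ) * A * B ^ (D - 1) * C) ^ 2 + (A * B ^ D) ^ 2 := by
    have h1 : 1 / ((D:ℝ) + 2) ≤ 1 := by rw [div_le_one hd2]; linarith
    have h3 : (D:ℝ) / ((D:ℝ) + 2) ≤ 1 := by rw [div_le_one hd2]; linarith
    nlinarith [hP₁0.le, hP₂0.le, hP₃0.le]
  -- lower bound the geometric mean by the claimed constant
  have h1 : (D:ℝ) ^ ((D:ℝ) / ((D:ℝ) + 2)) ≤ (D:ℝ) ^ (2 * ((D:ℝ) / ((D:ℝ) + 2))) :=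
    Real.rpow_le_rpow_of_exponent_le hd1 (by linarith [hw₃0])
  have h2 : z ^ ((2 * (D:ℝ) + 2) / ((D:ℝ) + 2)) * (1 / 4)
      ≤ (A * B ^ D * C) ^ ((2 * (D:ℝ) + 2) / ((D:ℝ) + 2)) := by
    have hzp : (z / 2) ^ ((2 * (D:ℝ) + 2) / ((D:ℝ) + 2))
        ≤ (A * B ^ D * C) ^ ((2 * (D:ℝ) + 2) / ((D:ℝ) + 2)) :=
      Real.rpow_le_rpow (by positivity) hθ hp0
    have hdiv : (z / 2) ^ ((2 * (D:ℝ) + 2) / ((D:ℝ) + 2))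
        = z ^ ((2 * (D:ℝ) + 2) / ((D:ℝ) + 2)) / 2 ^ ((2 * (D:ℝ) + 2) / ((D:ℝ) + 2)) :=
      Real.div_rpow hz.le (by norm_num) _
    have h24 : (2:ℝ) ^ ((2:ℕ):ℝ) = 4 := by rw [Real.rpow_natCast]; norm_num
    have h2p : (2:ℝ) ^ ((2 * (D:ℝ) + 2) / ((D:ℝ) + 2)) ≤ 4 := by
      have hple : (2 * (D:ℝ) + 2) / ((D:ℝ) + 2) ≤ ((2:ℕ):ℝ) := by
        rw [div_le_iff₀ hd2]; push_cast; linarith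
      calc (2:ℝ) ^ ((2 * (D:ℝ) + 2) / ((D:ℝ) + 2)) ≤ (2:ℝ) ^ ((2:ℕ):ℝ) :=
            Real.rpow_le_rpow_of_exponent_le one_le_two hple
        _ = 4 := h24
    have hzpos : (0:ℝ) < z ^ ((2 * (D:ℝ) + 2) / ((D:ℝ) + 2)) := Real.rpow_pos_of_pos hz _
    have hfour : z ^ ((2 * (D:ℝ) + 2) / ((D:ℝ) + 2)) / 4
        ≤ z ^ ((2 * (D:ℝ) + 2) / ((D:ℝ) + 2)) / 2 ^ ((2 * (D:ℝ) + 2) / ((D:ℝ) + 2)) :=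
      div_le_div_of_nonneg_left hzpos.le (Real.rpow_pos_of_pos two_pos _) h2p
    calc z ^ ((2 * (D:ℝ) + 2) / ((D:ℝ) + 2)) * (1 / 4)
        = z ^ ((2 * (D:ℝ) + 2) / ((D:ℝ) + 2)) / 4 := by ring
      _ ≤ z ^ ((2 * (D:ℝ) + 2) / ((D:ℝ) + 2)) / 2 ^ ((2 * (D:ℝ) + 2) / ((D:ℝ) + 2)) := hfour
      _ = (z / 2) ^ ((2 * (D:ℝ) + 2) / ((D:ℝ) + 2)) := hdiv.symm
      _ ≤ _ := hzp
  have hfin : 1 / 4 * (D : ℝ) ^ ((D : ℝ) / ((D : ℝ) + 2)) * z ^ ((2 * (D : ℝ) + 2) / ((D : ℝ) + 2))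
      ≤ (D:ℝ) ^ (2 * ((D:ℝ) / ((D:ℝ) + 2))) * (A * B ^ D * C) ^ ((2 * (D:ℝ) + 2) / ((D:ℝ) + 2)) := by
    have := mul_le_mul h1 h2 (by positivity) (Real.rpow_nonneg hd0.le _)
    calc 1 / 4 * (D : ℝ) ^ ((D : ℝ) / ((D : ℝ) + 2)) * z ^ ((2 * (D : ℝ) + 2) / ((D : ℝ) + 2))
        = (D : ℝ) ^ ((D : ℝ) / ((D : ℝ) + 2)) * (z ^ ((2 * (D : ℝ) + 2) / ((D : ℝ) + 2)) * (1/4)) := by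
          ring
      _ ≤ _ := this
  linarith [hfin, key ▸ amgm]

/-- exponential convergence of the deep gradient flow after the signal
hitting time `T^sig = inf{ t ≥ 0 : θ(t) ≥ z/2 }` (assumed finite, i.e. the hitting set
is nonempty): for `t ≥ T^sig`,
`0 ≤ z − θ(t) ≤ (z/2) exp(−(1/4) D^{D/(D+2)} z^{(2D+2)/(D+2)} (t − T^sig))`. -/
theorem deep_flow_final_convergence
    (D : ℕ) (hD : 1 ≤ D) (lam b₀ z : ℝ) (hlam : 0 < lam) (hb₀ : 0 < b₀) (hz : 0 < z)
    (a b β : ℝ → ℝ)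
    (ha0 : a 0 = Real.sqrt lam) (hb0 : b 0 = b₀) (hβ0 : β 0 = 0)
    (ha : ∀ t : ℝ, 0 ≤ t →
      HasDerivAt a ((b t) ^ D * β t * (z - a t * (b t) ^ D * β t)) t)
    (hb : ∀ t : ℝ, 0 ≤ t →
      HasDerivAt b ((D : ℝ) * a t * (b t) ^ (D - 1) * β t * (z - a t * (b t) ^ D * β t)) t)
    (hβ : ∀ t : ℝ, 0 ≤ t →
      HasDerivAt β (a t * (b t) ^ D * (z - a t * (b t) ^ D * β t)) t)
    (hne : {t : ℝ | 0 ≤ t ∧ z / 2 ≤ a t * (b t) ^ D * β t}.Nonempty)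
    (Tsig : ℝ) (hTsig : Tsig = sInf {t : ℝ | 0 ≤ t ∧ z / 2 ≤ a t * (b t) ^ D * β t}) :
    ∀ t : ℝ, Tsig ≤ t →
      0 ≤ z - a t * (b t) ^ D * β t ∧
      z - a t * (b t) ^ D * β t ≤
        (z / 2) * Real.exp (-(1 / 4) * (D : ℝ) ^ ((D : ℝ) / ((D : ℝ) + 2)) *
          z ^ ((2 * (D : ℝ) + 2) / ((D : ℝ) + 2)) * (t - Tsig)) := by
  classical
  obtain ⟨k, hk⟩ : ∃ k, D = k + 1 := ⟨D - 1, (Nat.succ_pred_eq_of_pos hD).symm⟩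
  set Q : ℝ → ℝ := fun s => (b s ^ D * β s) ^ 2 + ((D : ℝ) * a s * b s ^ (D - 1) * β s) ^ 2 +
    (a s * b s ^ D) ^ 2 with hQdef
  have hQ0 : ∀ s, 0 ≤ Q s := fun s => by positivity
  -- derivative of θ
  have hθd : ∀ s, 0 ≤ s →
      HasDerivAt (fun u => a u * b u ^ D * β u) ((z - a s * b s ^ D * β s) * Q s) s := by
    intro s hs
    have h := ((ha s hs).mul ((hb s hs).pow D)).mul (hβ s hs)
    refine h.congr_deriv ?_
    simp only [hQdef]
    subst hk
    simp only [Nat.add_sub_cancel]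
    push_cast
    simp only [Pi.mul_apply, Pi.pow_apply]
    ring
  -- continuity of Q on [0,∞)
  have hQc : ∀ s, 0 ≤ s → ContinuousAt Q s := by
    intro s hs
    have ca := (ha s hs).continuousAt
    have cb := (hb s hs).continuousAt
    have cβ := (hβ s hs).continuousAt
    exact (((cb.pow D).mul cβ).pow 2).add
      ((((continuousAt_const.mul ca).mul (cb.pow (D - 1))).mul cβ).pow 2) |>.add
      ((ca.mul (cb.pow D)).pow 2)
  -- truncated Q, continuous on all of ℝ
  set Q' : ℝ → ℝ := fun s => Q (max s 0) with hQ'def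
  have hQ'c : Continuous Q' := by
    rw [continuous_iff_continuousAt]
    intro s
    show ContinuousAt (Q ∘ fun u : ℝ => max u 0) s
    exact ContinuousAt.comp (hQc (max s 0) (le_max_right _ _))
      ((continuous_id.max continuous_const).continuousAt)
  have hQ'eq : ∀ s : ℝ, 0 ≤ s → Q' s = Q s := by
    intro s hs; simp only [hQ'def, max_eq_left hs]
  set R : ℝ → ℝ := fun u => ∫ x in (0:ℝ)..u, Q' x with hRdef
  have hR : ∀ s : ℝ, HasDerivAt R (Q' s) s := by
    intro s
    exact intervalIntegral.integral_hasDerivAt_right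
      (hQ'c.intervalIntegrable _ _)
      (hQ'c.stronglyMeasurableAtFilter _ _)
      hQ'c.continuousAt
  -- Step A : z - θ t > 0 for all t ≥ 0
  have hfpos : ∀ t : ℝ, 0 ≤ t → 0 < z - a t * b t ^ D * β t := by
    intro t ht
    set g : ℝ → ℝ := fun s => (z - a s * b s ^ D * β s) * Real.exp (R s) with hgdef
    have hg : ∀ s : ℝ, 0 ≤ s → HasDerivAt g 0 s := by
      intro s hs
      have h1 := (hθd s hs).const_sub z
      have h2 := (hR s).exp
      have h3 := h1.mul h2
      refine h3.congr_deriv ?_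
      rw [hQ'eq s hs]; ring
    have hgc : ContinuousOn g (Set.Icc 0 t) :=
      fun s hs => ((hg s hs.1).continuousAt).continuousWithinAt
    have hconst := constant_of_has_deriv_right_zero hgc
      (fun x hx => ((hg x hx.1).hasDerivWithinAt)) t ⟨ht, le_refl t⟩
    have hθ0 : a 0 * b 0 ^ D * β 0 = 0 := by rw [hβ0]; ring
    have hg0 : g 0 = z := by
      simp only [hgdef, hθ0, hRdef, intervalIntegral.integral_same, Real.exp_zero, sub_zero,
        mul_one]
    rw [hg0] at hconst
    have hE := Real.exp_pos (R t)
    by_contra hcon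
    push_neg at hcon
    have : g t ≤ 0 := mul_nonpos_of_nonpos_of_nonneg hcon hE.le
    linarith
  -- continuity of θ on [0,∞)
  have hθcont : ∀ s, 0 ≤ s → ContinuousAt (fun u => a u * b u ^ D * β u) s :=
    fun s hs => (hθd s hs).continuousAt
  -- Step C : θ is monotone on [0,∞)
  have hθmono : MonotoneOn (fun u => a u * b u ^ D * β u) (Set.Ici 0) := by
    apply monotoneOn_of_deriv_nonneg (convex_Ici 0)
      (fun s hs => (hθcont s hs).continuousWithinAt)
    · intro s hs
      rw [interior_Ici] at hs
      exact (hθd s (le_of_lt hs)).differentiableAt.differentiableWithinAt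
    · intro s hs
      rw [interior_Ici] at hs
      rw [(hθd s hs.le).deriv]
      exact mul_nonneg (hfpos s hs.le).le (hQ0 s)
  -- Step B : Tsig belongs to the hitting set
  have hSclosed : IsClosed {t : ℝ | 0 ≤ t ∧ z / 2 ≤ a t * (b t) ^ D * β t} := by
    have hcont : ContinuousOn (fun u => a u * b u ^ D * β u) (Set.Ici 0) :=
      fun s hs => (hθcont s hs).continuousWithinAt
    have h1 := hcont.preimage_isClosed_of_isClosed isClosed_Ici (isClosed_Ici (a := z / 2))
    have hset : {t : ℝ | 0 ≤ t ∧ z / 2 ≤ a t * (b t) ^ D * β t}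
        = Set.Ici 0 ∩ (fun u => a u * b u ^ D * β u) ⁻¹' Set.Ici (z / 2) := by
      ext s
      simp [Set.mem_Ici, Set.mem_inter_iff, Set.mem_preimage]
    rw [hset]
    exact h1
  have hbdd : BddBelow {t : ℝ | 0 ≤ t ∧ z / 2 ≤ a t * (b t) ^ D * β t} :=
    ⟨0, fun x hx => hx.1⟩
  have hmem : Tsig ∈ {t : ℝ | 0 ≤ t ∧ z / 2 ≤ a t * (b t) ^ D * β t} := by
    rw [hTsig]; exact hSclosed.csInf_mem hne hbdd
  have hT0 : 0 ≤ Tsig := hmem.1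
  have hTθ : z / 2 ≤ a Tsig * b Tsig ^ D * β Tsig := hmem.2
  -- Step D : lower bound on Q after Tsig
  have hQlow : ∀ s, Tsig ≤ s →
      1 / 4 * (D : ℝ) ^ ((D : ℝ) / ((D : ℝ) + 2)) * z ^ ((2 * (D : ℝ) + 2) / ((D : ℝ) + 2))
        ≤ Q s := by
    intro s hs
    have hθs : z / 2 ≤ a s * b s ^ D * β s :=
      le_trans hTθ (hθmono (Set.mem_Ici.2 hT0) (Set.mem_Ici.2 (hT0.trans hs)) hs)
    exact dfc_key D hD z (a s) (b s) (β s) hz hθs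
  -- Step E : conclusion
  intro t ht
  have ht0 : 0 ≤ t := hT0.trans ht
  refine ⟨(hfpos t ht0).le, ?_⟩
  set c : ℝ := 1 / 4 * (D : ℝ) ^ ((D : ℝ) / ((D : ℝ) + 2)) *
    z ^ ((2 * (D : ℝ) + 2) / ((D : ℝ) + 2)) with hcdef
  have hc0 : 0 ≤ c := by rw [hcdef]; positivity
  set h : ℝ → ℝ := fun s => (z - a s * b s ^ D * β s) * Real.exp (c * (s - Tsig)) with hhdef
  have hhd : ∀ s : ℝ, 0 ≤ s → HasDerivAt h
      ((z - a s * b s ^ D * β s) * (c - Q s) * Real.exp (c * (s - Tsig))) s := by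
    intro s hs
    have h1 := (hθd s hs).const_sub z
    have hin : HasDerivAt (fun u : ℝ => c * (u - Tsig)) c s := by
      have := ((hasDerivAt_id s).sub_const Tsig).const_mul c
      simpa using this
    have h2 := hin.exp
    have h3 := h1.mul h2
    refine h3.congr_deriv ?_
    ring
  have hanti : AntitoneOn h (Set.Ici Tsig) := by
    apply antitoneOn_of_deriv_nonpos (convex_Ici Tsig)
      (fun s hs => (hhd s (hT0.trans hs)).continuousAt.continuousWithinAt)
    · intro s hs
      rw [interior_Ici] at hs
      exact (hhd s (hT0.trans hs.le)).differentiableAt.differentiableWithinAt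
    · intro s hs
      rw [interior_Ici] at hs
      rw [(hhd s (hT0.trans hs.le)).deriv]
      apply mul_nonpos_of_nonpos_of_nonneg _ (Real.exp_pos _).le
      exact mul_nonpos_of_nonneg_of_nonpos (hfpos s (hT0.trans hs.le)).le
        (sub_nonpos.2 (hQlow s hs.le))
  have hle : h t ≤ h Tsig := hanti (Set.self_mem_Ici) (Set.mem_Ici.2 ht) ht
  have hhT : h Tsig ≤ z / 2 := by
    simp only [hhdef, sub_self, mul_zero, Real.exp_zero, mul_one]
    linarith
  have hht : h t = (z - a t * b t ^ D * β t) * Real.exp (c * (t - Tsig)) := rfl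
  have hE := Real.exp_pos (c * (t - Tsig))
  have hgoal : z - a t * b t ^ D * β t ≤ z / 2 * Real.exp (-(c * (t - Tsig))) := by
    rw [Real.exp_neg]
    rw [show z / 2 * (Real.exp (c * (t - Tsig)))⁻¹ = z / 2 / Real.exp (c * (t - Tsig)) by
      ring]
    rw [le_div_iff₀ hE]
    calc (z - a t * b t ^ D * β t) * Real.exp (c * (t - Tsig)) = h t := rfl
      _ ≤ h Tsig := hle
      _ ≤ z / 2 := hhT
  have harg : -(1 / 4) * (D : ℝ) ^ ((D : ℝ) / ((D : ℝ) + 2)) *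
      z ^ ((2 * (D : ℝ) + 2) / ((D : ℝ) + 2)) * (t - Tsig) = -(c * (t - Tsig)) := by
    rw [hcdef]; ring
  rw [harg]
  exact hgoal
end
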